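/- arXiv:2306.17731 — 3 statements merged into one kernel-verified Lean document; each statement's English description precedes it below -/
import Mathlib

section
/- Let (f^t) be a C^1 flow of diffeomorphisms of [0,1] whose time-1 map f = f^1 is of class C^r, where r ∈ {1, 1+bv, 1+ac}. Then there is an orientation-preserving C^1 diffeomorphism φ of [0,1] conjugating the flow (f^t) to the flow of a C^r vector field X̃ on [0,1] which satisfies var(DX̃) = var(log Df). -/
open Set MeasureTheory Filter Topology

noncomputable section

/-- An orientation-preserving `C¹` diffeomorphism of the interval `[0,1]`, recorded together
with its derivative, and extended by the identity outside of `[0,1]`. -/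
structure C1Diffeo : Type where
  toFun : ℝ → ℝ
  derivFun : ℝ → ℝ
  map_zero : toFun 0 = 0
  map_one : toFun 1 = 1
  fixes_outside : ∀ x : ℝ, x ∉ Icc (0:ℝ) 1 → toFun x = x
  bijOn : BijOn toFun (Icc (0:ℝ) 1) (Icc (0:ℝ) 1)
  hasDeriv : ∀ x ∈ Icc (0:ℝ) 1, HasDerivWithinAt toFun (derivFun x) (Icc (0:ℝ) 1) x
  derivFun_cont : ContinuousOn derivFun (Icc (0:ℝ) 1)
  derivFun_pos : ∀ x ∈ Icc (0:ℝ) 1, 0 < derivFun x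

/-- `Φ`, together with its spatial derivative `Φ'`, is a `C¹` flow on `s ⊆ ℝ` (extended by the
identity outside of `s`): a continuous group homomorphism from `(ℝ,+)` to the
orientation-preserving `C¹` diffeomorphisms of `s` with the `C¹` topology. -/
def IsC1FlowOn (s : Set ℝ) (Φ Φ' : ℝ → ℝ → ℝ) : Prop :=
  (∀ x : ℝ, Φ 0 x = x) ∧
  (∀ t u : ℝ, ∀ x : ℝ, Φ (t + u) x = Φ t (Φ u x)) ∧
  (∀ t : ℝ, ∀ x ∉ s, Φ t x = x) ∧
  (∀ t : ℝ, BijOn (Φ t) s s) ∧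
  (∀ t : ℝ, ∀ x ∈ s, HasDerivWithinAt (Φ t) (Φ' t x) s x) ∧
  (∀ t : ℝ, ContinuousOn (Φ' t) s) ∧
  (∀ t : ℝ, ∀ x ∈ s, 0 < Φ' t x) ∧
  (∀ t₀ : ℝ, ∀ K : Set ℝ, IsCompact K → K ⊆ s → ∀ ε > (0:ℝ), ∃ δ > (0:ℝ), ∀ t : ℝ,
    |t - t₀| < δ → ∀ x ∈ K,
      |Φ t x - Φ t₀ x| + |Real.log (Φ' t x) - Real.log (Φ' t₀ x)| < ε)

lemma unif_of_cont (F : ℝ × ℝ → ℝ) (hF : Continuous F) (t₀ : ℝ) {ε : ℝ} (hε : 0 < ε) :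
    ∃ δ > (0:ℝ), ∀ t : ℝ, |t - t₀| < δ → ∀ z ∈ Icc (0:ℝ) 1, |F (t, z) - F (t₀, z)| < ε := by
  have hK : IsCompact (Icc (t₀ - 1) (t₀ + 1) ×ˢ Icc (0:ℝ) 1) :=
    (isCompact_Icc).prod isCompact_Icc
  have hUC := hK.uniformContinuousOn_of_continuous hF.continuousOn
  rw [Metric.uniformContinuousOn_iff] at hUC
  obtain ⟨δ', hδ', hδ⟩ := hUC ε hε
  refine ⟨min δ' 1, lt_min hδ' one_pos, fun t ht z hz => ?_⟩
  have ht1 : |t - t₀| < 1 := lt_of_lt_of_le ht (min_le_right _ _)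
  have htm : t ∈ Icc (t₀ - 1) (t₀ + 1) := by
    rw [abs_lt] at ht1; constructor <;> linarith [ht1.1, ht1.2]
  have h1 : (t, z) ∈ Icc (t₀ - 1) (t₀ + 1) ×ˢ Icc (0:ℝ) 1 := ⟨htm, hz⟩
  have h2 : (t₀, z) ∈ Icc (t₀ - 1) (t₀ + 1) ×ˢ Icc (0:ℝ) 1 :=
    ⟨⟨by linarith, by linarith⟩, hz⟩
  have hd : dist (t, z) ((t₀, z) : ℝ × ℝ) < δ' := by
    rw [Prod.dist_eq]
    simp only [Real.dist_eq, sub_self, abs_zero]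
    exact max_lt (lt_of_lt_of_le ht (min_le_left _ _)) hδ'
  have := hδ _ h1 _ h2 hd
  rwa [Real.dist_eq] at this

lemma jointCont (f : ℝ → ℝ → ℝ) (hx : ∀ t, Continuous fun z => f t z)
    (ht : ∀ t₀ : ℝ, ∀ ε > (0:ℝ), ∃ δ > (0:ℝ), ∀ t, |t - t₀| < δ → ∀ z : ℝ, |f t z - f t₀ z| < ε) :
    Continuous fun p : ℝ × ℝ => f p.1 p.2 := by
  rw [continuous_iff_continuousAt]
  rintro ⟨t₀, z₀⟩
  rw [Metric.continuousAt_iff]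
  intro ε hε
  obtain ⟨δ₁, hδ₁, h1⟩ := ht t₀ (ε/2) (by linarith)
  obtain ⟨δ₂, hδ₂, h2⟩ := Metric.continuous_iff.1 (hx t₀) z₀ (ε/2) (by linarith)
  refine ⟨min δ₁ δ₂, lt_min hδ₁ hδ₂, ?_⟩
  rintro ⟨t, z⟩ hp
  rw [Prod.dist_eq, max_lt_iff] at hp
  have e1 : |f t z - f t₀ z| < ε/2 := by
    apply h1 t _ z
    have := hp.1; rw [Real.dist_eq] at this
    exact lt_of_lt_of_le this (min_le_left _ _)
  have e2 : dist (f t₀ z) (f t₀ z₀) < ε/2 :=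
    h2 z (lt_of_lt_of_le hp.2 (min_le_right _ _))
  rw [Real.dist_eq] at e2 ⊢
  calc |f t z - f t₀ z₀| ≤ |f t z - f t₀ z| + |f t₀ z - f t₀ z₀| := abs_sub_le _ _ _
    _ < ε/2 + ε/2 := add_lt_add e1 e2
    _ = ε := by ring

namespace Reg

def pj (x : ℝ) : ℝ := max 0 (min 1 x)

lemma pj_mem (x : ℝ) : pj x ∈ Icc (0:ℝ) 1 :=
  ⟨le_max_left _ _, max_le (by norm_num) (min_le_left _ _)⟩

lemma pj_eq {x : ℝ} (hx : x ∈ Icc (0:ℝ) 1) : pj x = x := by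
  simp only [pj, min_eq_right hx.2, max_eq_right hx.1]

lemma pj_cont : Continuous pj := continuous_const.max (continuous_const.min continuous_id)

lemma pj_of_one_le {x : ℝ} (hx : (1:ℝ) ≤ x) : pj x = 1 := by
  simp only [pj, min_eq_left hx]; norm_num

lemma pj_of_nonpos {x : ℝ} (hx : x ≤ (0:ℝ)) : pj x = 0 :=
  max_eq_left (le_trans (min_le_right _ _) hx)

variable (Φ' : ℝ → ℝ → ℝ)

@[irreducible] def Lg (σ z : ℝ) : ℝ := Real.log (Φ' σ (pj z))
@[irreducible] def uu (z : ℝ) : ℝ := ∫ s in (0:ℝ)..1, Lg Φ' s z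
@[irreducible] def cc : ℝ := ∫ y in (0:ℝ)..1, Real.exp (uu Φ' y)
@[irreducible] def GG (x : ℝ) : ℝ := (∫ y in (0:ℝ)..x, Real.exp (uu Φ' y)) / cc Φ'
@[irreducible] def HH : ℝ → ℝ := Function.invFun (GG Φ')
@[irreducible] def EE (t z : ℝ) : ℝ := Real.exp (∫ σ in t..(t+1), Lg Φ' σ z)
@[irreducible] def Psi (t y : ℝ) : ℝ :=
  if y ∈ Icc (0:ℝ) 1 then (∫ z in (0:ℝ)..(HH Φ' y), EE Φ' t z) / cc Φ' else y
@[irreducible] def Psi' (t y : ℝ) : ℝ :=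
  (EE Φ' t (HH Φ' y) / cc Φ') * (Real.exp (uu Φ' (HH Φ' y)) / cc Φ')⁻¹
@[irreducible] def XX (y : ℝ) : ℝ := (∫ z in (0:ℝ)..(HH Φ' y), Real.exp (uu Φ' z) * Lg Φ' 1 z) / cc Φ'
@[irreducible] def XX' (y : ℝ) : ℝ := Lg Φ' 1 (HH Φ' y)

end Reg

section Lemmas
open Reg
variable {Φ Φ' : ℝ → ℝ → ℝ} (hΦ : IsC1FlowOn (Icc (0:ℝ) 1) Φ Φ')

include hΦ

lemma contPhi (t : ℝ) : ContinuousOn (Φ t) (Icc (0:ℝ) 1) :=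
  fun x hx => (hΦ.2.2.2.2.1 t x hx).continuousWithinAt

lemma mapsToPhi (t : ℝ) : MapsTo (Φ t) (Icc (0:ℝ) 1) (Icc (0:ℝ) 1) :=
  (hΦ.2.2.2.1 t).mapsTo

lemma strictMonoPhi (t : ℝ) : StrictMonoOn (Φ t) (Icc (0:ℝ) 1) := by
  apply strictMonoOn_of_deriv_pos (convex_Icc _ _) (contPhi hΦ t)
  intro x hx
  rw [interior_Icc] at hx
  have h := (hΦ.2.2.2.2.1 t x (Ioo_subset_Icc_self hx)).hasDerivAt
    (Icc_mem_nhds hx.1 hx.2)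
  rw [h.deriv]
  exact hΦ.2.2.2.2.2.2.1 t x (Ioo_subset_Icc_self hx)

lemma phi_zero (t : ℝ) : Φ t 0 = 0 := by
  obtain ⟨x₀, hx₀, hfx₀⟩ := (hΦ.2.2.2.1 t).surjOn (show (0:ℝ) ∈ Icc (0:ℝ) 1 by norm_num)
  have h0 : (0:ℝ) ∈ Icc (0:ℝ) 1 := by norm_num
  have h1 : Φ t 0 ≤ Φ t x₀ := (strictMonoPhi hΦ t).monotoneOn h0 hx₀ hx₀.1
  have h2 : Φ t 0 ∈ Icc (0:ℝ) 1 := mapsToPhi hΦ t h0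
  rw [hfx₀] at h1
  exact le_antisymm h1 h2.1

lemma phi_one (t : ℝ) : Φ t 1 = 1 := by
  obtain ⟨x₀, hx₀, hfx₀⟩ := (hΦ.2.2.2.1 t).surjOn (show (1:ℝ) ∈ Icc (0:ℝ) 1 by norm_num)
  have h0 : (1:ℝ) ∈ Icc (0:ℝ) 1 := by norm_num
  have h1 : Φ t x₀ ≤ Φ t 1 := (strictMonoPhi hΦ t).monotoneOn hx₀ h0 hx₀.2
  have h2 : Φ t 1 ∈ Icc (0:ℝ) 1 := mapsToPhi hΦ t h0
  rw [hfx₀] at h1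
  exact le_antisymm h2.2 h1

lemma cocycle (t s : ℝ) {x : ℝ} (hx : x ∈ Icc (0:ℝ) 1) :
    Φ' (t + s) x = Φ' t (Φ s x) * Φ' s x := by
  have hU : UniqueDiffWithinAt ℝ (Icc (0:ℝ) 1) x := uniqueDiffOn_Icc one_pos x hx
  have h1 : HasDerivWithinAt (Φ (t + s)) (Φ' (t + s) x) (Icc (0:ℝ) 1) x :=
    hΦ.2.2.2.2.1 _ x hx
  have h2 : HasDerivWithinAt (fun y => Φ t (Φ s y)) (Φ' t (Φ s x) * Φ' s x)
      (Icc (0:ℝ) 1) x :=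
    HasDerivWithinAt.comp x (hΦ.2.2.2.2.1 t _ (mapsToPhi hΦ s hx))
      (hΦ.2.2.2.2.1 s x hx) (mapsToPhi hΦ s)
  have h3 : HasDerivWithinAt (Φ (t + s)) (Φ' t (Φ s x) * Φ' s x) (Icc (0:ℝ) 1) x := by
    have : (fun y => Φ t (Φ s y)) = Φ (t + s) := funext fun y => (hΦ.2.1 t s y).symm
    rwa [this] at h2
  rw [← h1.derivWithin hU, ← h3.derivWithin hU]

lemma hLg_cont : Continuous fun p : ℝ × ℝ => Lg Φ' p.1 p.2 := by
  apply jointCont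
  · intro t
    have h1 : ContinuousOn (fun x => Real.log (Φ' t x)) (Icc (0:ℝ) 1) :=
      (hΦ.2.2.2.2.2.1 t).log (fun x hx => ne_of_gt (hΦ.2.2.2.2.2.2.1 t x hx))
    have h2 := h1.comp_continuous pj_cont pj_mem
    simpa [Lg, Function.comp_def] using h2
  · intro t₀ ε hε
    obtain ⟨δ, hδ, hd⟩ := hΦ.2.2.2.2.2.2.2 t₀ (Icc 0 1) isCompact_Icc subset_rfl ε hε
    refine ⟨δ, hδ, fun t ht z => ?_⟩
    have := hd t ht (pj z) (pj_mem z)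
    have h1 : |Lg Φ' t z - Lg Φ' t₀ z| ≤
        |Φ t (pj z) - Φ t₀ (pj z)| + |Real.log (Φ' t (pj z)) - Real.log (Φ' t₀ (pj z))| := by
      simp only [Lg]
      exact le_add_of_nonneg_left (abs_nonneg _)
    exact lt_of_le_of_lt h1 this

lemma huu_cont : Continuous (uu Φ') := by
  unfold uu
  exact intervalIntegral.continuous_parametric_intervalIntegral_of_continuous'
    (f := fun z s => Lg Φ' s z)
    (by exact (hLg_cont hΦ).comp (continuous_snd.prodMk continuous_fst)) 0 1

lemma keyB (t : ℝ) {x : ℝ} (hx : x ∈ Icc (0:ℝ) 1) :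
    uu Φ' (Φ t x) + Lg Φ' t x = ∫ σ in t..(t+1), Lg Φ' σ x := by
  have hmem := mapsToPhi hΦ t hx
  have hLgt : ∀ s : ℝ, Lg Φ' s (Φ t x) = Lg Φ' (s + t) x - Lg Φ' t x := by
    intro s
    have hc := cocycle hΦ s t hx
    simp only [Lg, pj_eq hmem, pj_eq hx]
    rw [hc, Real.log_mul (ne_of_gt (hΦ.2.2.2.2.2.2.1 s _ hmem))
      (ne_of_gt (hΦ.2.2.2.2.2.2.1 t x hx))]
    ring
  have h1 : uu Φ' (Φ t x) = (∫ s in (0:ℝ)..1, Lg Φ' (s + t) x) - Lg Φ' t x := by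
    rw [uu, intervalIntegral.integral_congr (fun s _ => hLgt s),
      intervalIntegral.integral_sub ?_ (intervalIntegrable_const)]
    · simp
    · have hc : Continuous fun s => Lg Φ' (s + t) x :=
        (hLg_cont hΦ).comp ((continuous_id.add continuous_const).prodMk continuous_const)
      exact hc.intervalIntegrable _ _
  rw [h1, intervalIntegral.integral_comp_add_right (fun σ => Lg Φ' σ x) t, zero_add, add_comm t 1]
  ring_nf

lemma hcc_pos : 0 < cc Φ' := by
  rw [cc]
  apply intervalIntegral.intervalIntegral_pos_of_pos
  · exact ((Real.continuous_exp.comp (huu_cont hΦ)).intervalIntegrable _ _)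
  · exact fun x => Real.exp_pos _
  · norm_num

lemma hGG_deriv (x : ℝ) : HasDerivAt (GG Φ') (Real.exp (uu Φ' x) / cc Φ') x := by
  have hc : Continuous fun y => Real.exp (uu Φ' y) := Real.continuous_exp.comp (huu_cont hΦ)
  unfold GG
  exact (intervalIntegral.integral_hasDerivAt_right (hc.intervalIntegrable _ _)
    (hc.stronglyMeasurableAtFilter _ _) hc.continuousAt).div_const _

lemma hGG_cont : Continuous (GG Φ') :=
  continuous_iff_continuousAt.2 fun x => (hGG_deriv hΦ x).continuousAt

lemma hGG_mono : StrictMono (GG Φ') :=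
  strictMono_of_deriv_pos fun x => by
    rw [(hGG_deriv hΦ x).deriv]; exact div_pos (Real.exp_pos _) (hcc_pos hΦ)

omit hΦ in
lemma hGG_zero : GG Φ' 0 = 0 := by simp [GG]

lemma hGG_one : GG Φ' 1 = 1 := by
  rw [GG, ← cc]; exact div_self (ne_of_gt (hcc_pos hΦ))

lemma hGG_surj : Function.Surjective (GG Φ') := by
  have hc : Continuous (GG Φ') := hGG_cont hΦ
  apply hc.surjective
  · have key : ∀ x : ℝ, 1 ≤ x → GG Φ' x = GG Φ' 1 + (x - 1) * (Real.exp (uu Φ' 1) / cc Φ') := by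
      intro x hx
      have hsplit : (∫ y in (0:ℝ)..1, Real.exp (uu Φ' y)) + (∫ y in (1:ℝ)..x, Real.exp (uu Φ' y))
          = ∫ y in (0:ℝ)..x, Real.exp (uu Φ' y) := by
        apply intervalIntegral.integral_add_adjacent_intervals <;>
          exact ((Real.continuous_exp.comp (huu_cont hΦ)).intervalIntegrable _ _)
      have huconst : ∀ y ∈ uIcc (1:ℝ) x, Real.exp (uu Φ' y) = Real.exp (uu Φ' 1) := by
        intro y hy
        rw [uIcc_of_le hx] at hy
        have : ∀ s : ℝ, Lg Φ' s y = Lg Φ' s 1 := fun s => by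
          simp only [Lg]; rw [pj_of_one_le hy.1, pj_of_one_le le_rfl]
        simp only [uu]
        rw [intervalIntegral.integral_congr (fun s _ => this s)]
      have h2 : (∫ y in (1:ℝ)..x, Real.exp (uu Φ' y)) = (x - 1) * Real.exp (uu Φ' 1) := by
        rw [intervalIntegral.integral_congr huconst]; simp [mul_comm]
      simp only [GG, ← hsplit, h2]
      field_simp
    have haff : Tendsto (fun x => GG Φ' 1 + (x - 1) * (Real.exp (uu Φ' 1) / cc Φ')) atTop atTop := by
      apply tendsto_atTop_add_const_left
      exact (tendsto_atTop_add_const_right _ _ tendsto_id).atTop_mul_const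
        (div_pos (Real.exp_pos _) (hcc_pos hΦ))
    refine Tendsto.congr' ?_ haff
    filter_upwards [eventually_ge_atTop (1:ℝ)] with x hx using (key x hx).symm
  · have key : ∀ x : ℝ, x ≤ 0 → GG Φ' x = x * (Real.exp (uu Φ' 0) / cc Φ') := by
      intro x hx
      have huconst : ∀ y ∈ uIcc (0:ℝ) x, Real.exp (uu Φ' y) = Real.exp (uu Φ' 0) := by
        intro y hy
        rw [uIcc_of_ge hx] at hy
        have : ∀ s : ℝ, Lg Φ' s y = Lg Φ' s 0 := fun s => by
          simp only [Lg]; rw [pj_of_nonpos hy.2, pj_of_nonpos le_rfl]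
        simp only [uu]
        rw [intervalIntegral.integral_congr (fun s _ => this s)]
      simp only [GG]
      rw [intervalIntegral.integral_congr huconst]
      simp [mul_comm, mul_div_assoc]
    have haff : Tendsto (fun x : ℝ => x * (Real.exp (uu Φ' 0) / cc Φ')) atBot atBot :=
      Tendsto.atBot_mul_const (div_pos (Real.exp_pos _) (hcc_pos hΦ)) tendsto_id
    refine Tendsto.congr' ?_ haff
    filter_upwards [eventually_le_atBot (0:ℝ)] with x hx using (key x hx).symm

end Lemmas

section Lemmas2
open Reg
variable {Φ Φ' : ℝ → ℝ → ℝ} (hΦ : IsC1FlowOn (Icc (0:ℝ) 1) Φ Φ')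

include hΦ

lemma hHG (x : ℝ) : HH Φ' (GG Φ' x) = x := by
  rw [HH]; exact Function.leftInverse_invFun (hGG_mono hΦ).injective x

lemma hGH (y : ℝ) : GG Φ' (HH Φ' y) = y := by
  rw [HH]; exact Function.rightInverse_invFun (hGG_surj hΦ) y

lemma hHH_mono : StrictMono (HH Φ') := by
  intro a b hab
  have := (hGG_mono hΦ).lt_iff_lt (a := HH Φ' a) (b := HH Φ' b)
  rw [hGH hΦ, hGH hΦ] at this
  exact this.1 hab

lemma hHH_surj : Function.Surjective (HH Φ') := fun x => ⟨GG Φ' x, hHG hΦ x⟩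

lemma hHH_cont : Continuous (HH Φ') :=
  (hHH_mono hΦ).monotone.continuous_of_surjective (hHH_surj hΦ)

lemma hHH_zero : HH Φ' 0 = 0 := by
  conv_lhs => rw [← hGG_zero (Φ' := Φ')]
  exact hHG hΦ 0

lemma hHH_one : HH Φ' 1 = 1 := by
  conv_lhs => rw [← hGG_one hΦ]
  exact hHG hΦ 1

lemma hHH_mem {y : ℝ} (hy : y ∈ Icc (0:ℝ) 1) : HH Φ' y ∈ Icc (0:ℝ) 1 := by
  constructor
  · rw [← hHH_zero hΦ]; exact (hHH_mono hΦ).monotone hy.1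
  · rw [← hHH_one hΦ]; exact (hHH_mono hΦ).monotone hy.2

lemma hGG_mem {x : ℝ} (hx : x ∈ Icc (0:ℝ) 1) : GG Φ' x ∈ Icc (0:ℝ) 1 := by
  constructor
  · rw [← hGG_zero (Φ' := Φ')]; exact (hGG_mono hΦ).monotone hx.1
  · rw [← hGG_one hΦ]; exact (hGG_mono hΦ).monotone hx.2

lemma hHH_deriv (y : ℝ) :
    HasDerivAt (HH Φ') ((Real.exp (uu Φ' (HH Φ' y)) / cc Φ')⁻¹) y :=
  HasDerivAt.of_local_left_inverse (hHH_cont hΦ).continuousAt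
    (hGG_deriv hΦ (HH Φ' y)) (ne_of_gt (div_pos (Real.exp_pos _) (hcc_pos hΦ)))
    (Filter.Eventually.of_forall (hGH hΦ))

lemma hHH_image {a b : ℝ} : HH Φ' '' Icc a b = Icc (HH Φ' a) (HH Φ' b) := by
  apply Subset.antisymm
  · rintro _ ⟨x, hx, rfl⟩
    exact ⟨(hHH_mono hΦ).monotone hx.1, (hHH_mono hΦ).monotone hx.2⟩
  · intro y hy
    refine ⟨GG Φ' y, ?_, hHG hΦ y⟩
    constructor
    · have := (hGG_mono hΦ).monotone hy.1; rwa [hGH hΦ] at this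
    · have := (hGG_mono hΦ).monotone hy.2; rwa [hGH hΦ] at this

set_option maxHeartbeats 1000000 in
lemma hII_cont : Continuous fun p : ℝ × ℝ => ∫ σ in p.1..(p.1+1), Lg Φ' σ p.2 := by
  have hQ : Continuous fun p : ℝ × ℝ => ∫ σ in (0:ℝ)..p.2, Lg Φ' σ p.1 :=
    intervalIntegral.continuous_parametric_primitive_of_continuous
      (f := fun z σ => Lg Φ' σ z)
      (by exact (hLg_cont hΦ).comp (continuous_snd.prodMk continuous_fst))
  have hint : ∀ (a b z : ℝ), (∫ σ in a..b, Lg Φ' σ z) =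
      (∫ σ in (0:ℝ)..b, Lg Φ' σ z) - ∫ σ in (0:ℝ)..a, Lg Φ' σ z := by
    intro a b z
    rw [intervalIntegral.integral_interval_sub_left] <;>
      exact (((hLg_cont hΦ).comp (continuous_id.prodMk continuous_const)).intervalIntegrable _ _)
  have heq : (fun p : ℝ × ℝ => ∫ σ in p.1..(p.1+1), Lg Φ' σ p.2) = fun p : ℝ × ℝ =>
      ((∫ σ in (0:ℝ)..(p.1+1), Lg Φ' σ p.2) - ∫ σ in (0:ℝ)..p.1, Lg Φ' σ p.2) := by
    funext p; rw [hint]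
  rw [heq]
  apply Continuous.sub
  · have h1 : Continuous fun p : ℝ × ℝ => ((p.2, p.1 + 1) : ℝ × ℝ) :=
      continuous_snd.prodMk (continuous_fst.add continuous_const)
    have hc1 := hQ.comp h1
    simpa [Function.comp_def] using hc1
  · have h2 : Continuous fun p : ℝ × ℝ => ((p.2, p.1) : ℝ × ℝ) :=
      continuous_snd.prodMk continuous_fst
    have hc2 := hQ.comp h2
    simpa [Function.comp_def] using hc2

lemma hEE_cont : Continuous fun p : ℝ × ℝ => EE Φ' p.1 p.2 := by
  unfold EE; exact Real.continuous_exp.comp (hII_cont hΦ)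

omit hΦ in
lemma hEE_log (t z : ℝ) : Real.log (EE Φ' t z) = ∫ σ in t..(t+1), Lg Φ' σ z := by
  rw [EE]; exact Real.log_exp _

omit hΦ in
lemma hEE_zero (z : ℝ) : EE Φ' 0 z = Real.exp (uu Φ' z) := by
  rw [EE, uu, zero_add]

omit hΦ in
lemma hEE_pos (t z : ℝ) : 0 < EE Φ' t z := by rw [EE]; exact Real.exp_pos _

/-- exp (uu (Φ t z)) * Φ' t z = EE t z for z ∈ Icc -/
lemma hEE_eq (t : ℝ) {z : ℝ} (hz : z ∈ Icc (0:ℝ) 1) :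
    Real.exp (uu Φ' (Φ t z)) * Φ' t z = EE Φ' t z := by
  have h := keyB hΦ t hz
  have hpos := hΦ.2.2.2.2.2.2.1 t z hz
  have : Φ' t z = Real.exp (Lg Φ' t z) := by
    rw [Lg, pj_eq hz, Real.exp_log hpos]
  rw [this, ← Real.exp_add, EE, h]

/-- Key change-of-variables identity. -/
lemma keyCV (t : ℝ) (g : ℝ → ℝ) (hg : Continuous g) {x : ℝ} (hx : x ∈ Icc (0:ℝ) 1) :
    (∫ y in (0:ℝ)..(Φ t x), g y) = ∫ z in (0:ℝ)..x, Φ' t z • g (Φ t z) := by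
  have h0x : Icc (0:ℝ) x ⊆ Icc (0:ℝ) 1 := Icc_subset_Icc le_rfl hx.2
  have huIcc : uIcc (0:ℝ) x = Icc 0 x := uIcc_of_le hx.1
  have hmin : min (0:ℝ) x = 0 := min_eq_left hx.1
  have hmax : max (0:ℝ) x = x := max_eq_right hx.1
  have hmain := intervalIntegral.integral_comp_smul_deriv'' (a := (0:ℝ)) (b := x)
    (f := Φ t) (f' := Φ' t) (g := g)
    (by rw [huIcc]; exact (contPhi hΦ t).mono h0x)
    (by
      rw [hmin, hmax]
      intro z hz
      have hz1 : z ∈ Icc (0:ℝ) 1 := h0x (Ioo_subset_Icc_self hz)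
      have hD : HasDerivAt (Φ t) (Φ' t z) z := by
        apply (hΦ.2.2.2.2.1 t z hz1).hasDerivAt
        apply Icc_mem_nhds (lt_of_lt_of_le hz.1 (le_refl _)) (lt_of_lt_of_le hz.2 hx.2)
      exact hD.hasDerivWithinAt)
    (by rw [huIcc]; exact (hΦ.2.2.2.2.2.1 t).mono h0x)
    (hg.continuousOn)
  rw [phi_zero hΦ t] at hmain
  rw [← hmain]
  apply intervalIntegral.integral_congr
  intro z _
  rfl

/-- The key identity: `G (Φ t x) = (∫₀ˣ E t z dz)/c`. -/
lemma keyG (t : ℝ) {x : ℝ} (hx : x ∈ Icc (0:ℝ) 1) :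
    GG Φ' (Φ t x) = (∫ z in (0:ℝ)..x, EE Φ' t z) / cc Φ' := by
  rw [GG, keyCV hΦ t (fun y => Real.exp (uu Φ' y)) (Real.continuous_exp.comp (huu_cont hΦ)) hx]
  congr 1
  apply intervalIntegral.integral_congr
  intro z hz
  rw [uIcc_of_le hx.1] at hz
  have hz1 : z ∈ Icc (0:ℝ) 1 := Icc_subset_Icc le_rfl hx.2 hz
  simp only [smul_eq_mul]
  rw [mul_comm, hEE_eq hΦ t hz1]

end Lemmas2

section Lemmas3
open Reg
variable {Φ Φ' : ℝ → ℝ → ℝ} (hΦ : IsC1FlowOn (Icc (0:ℝ) 1) Φ Φ')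

include hΦ

lemma hPsi_repr (t : ℝ) {y : ℝ} (hy : y ∈ Icc (0:ℝ) 1) :
    Psi Φ' t y = GG Φ' (Φ t (HH Φ' y)) := by
  rw [Psi, if_pos hy, keyG hΦ t (hHH_mem hΦ hy)]

lemma hPsi_mem (t : ℝ) {y : ℝ} (hy : y ∈ Icc (0:ℝ) 1) : Psi Φ' t y ∈ Icc (0:ℝ) 1 := by
  rw [hPsi_repr hΦ t hy]
  exact hGG_mem hΦ (mapsToPhi hΦ t (hHH_mem hΦ hy))

lemma hPsi_zero (y : ℝ) : Psi Φ' 0 y = y := by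
  by_cases hy : y ∈ Icc (0:ℝ) 1
  · rw [hPsi_repr hΦ 0 hy, hΦ.1, hGH hΦ]
  · rw [Psi, if_neg hy]

omit hΦ in
lemma hPsi_out (t : ℝ) (y : ℝ) (hy : y ∉ Icc (0:ℝ) 1) : Psi Φ' t y = y := by
  rw [Psi, if_neg hy]

lemma hPsi_group (t u y : ℝ) : Psi Φ' (t + u) y = Psi Φ' t (Psi Φ' u y) := by
  by_cases hy : y ∈ Icc (0:ℝ) 1
  · rw [hPsi_repr hΦ _ hy, hPsi_repr hΦ t (hPsi_mem hΦ u hy), hPsi_repr hΦ u hy,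
      hHG hΦ, hΦ.2.1 t u]
  · rw [hPsi_out u y hy, hPsi_out t y hy]
    exact hPsi_out (t+u) y hy

lemma hHH_bijOn : BijOn (HH Φ') (Icc (0:ℝ) 1) (Icc (0:ℝ) 1) := by
  refine ⟨fun y hy => hHH_mem hΦ hy, (hHH_mono hΦ).injective.injOn, ?_⟩
  intro x hx
  exact ⟨GG Φ' x, hGG_mem hΦ hx, hHG hΦ x⟩

lemma hGG_bijOn : BijOn (GG Φ') (Icc (0:ℝ) 1) (Icc (0:ℝ) 1) := by
  refine ⟨fun y hy => hGG_mem hΦ hy, (hGG_mono hΦ).injective.injOn, ?_⟩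
  intro x hx
  exact ⟨HH Φ' x, hHH_mem hΦ hx, hGH hΦ x⟩

lemma hPsi_bijOn (t : ℝ) : BijOn (Psi Φ' t) (Icc (0:ℝ) 1) (Icc (0:ℝ) 1) := by
  have hb : BijOn (fun y => GG Φ' (Φ t (HH Φ' y))) (Icc (0:ℝ) 1) (Icc (0:ℝ) 1) :=
    ((hGG_bijOn hΦ).comp ((hΦ.2.2.2.1 t).comp (hHH_bijOn hΦ)))
  exact BijOn.congr hb (fun y hy => (hPsi_repr hΦ t hy).symm)

set_option maxHeartbeats 1000000 in
lemma hPsi_hasDeriv (t : ℝ) {y : ℝ} (hy : y ∈ Icc (0:ℝ) 1) :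
    HasDerivWithinAt (Psi Φ' t) (Psi' Φ' t y) (Icc (0:ℝ) 1) y := by
  have hEz : Continuous fun z => EE Φ' t z :=
    (hEE_cont hΦ).comp (continuous_const.prodMk continuous_id)
  have hA : ∀ w : ℝ, HasDerivAt (fun w => (∫ z in (0:ℝ)..w, EE Φ' t z) / cc Φ')
      (EE Φ' t w / cc Φ') w := fun w =>
    (intervalIntegral.integral_hasDerivAt_right (hEz.intervalIntegrable _ _)
      (hEz.stronglyMeasurableAtFilter _ _) hEz.continuousAt).div_const _
  have hcomp0 := HasDerivAt.comp y (hA (HH Φ' y)) (hHH_deriv hΦ y)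
  have hcomp : HasDerivAt (fun y => (∫ z in (0:ℝ)..(HH Φ' y), EE Φ' t z) / cc Φ')
      (Psi' Φ' t y) y := by
    simpa [Function.comp_def, Psi'] using hcomp0
  refine (hcomp.hasDerivWithinAt).congr ?_ ?_
  · intro z hz; rw [Psi, if_pos hz]
  · rw [Psi, if_pos hy]

set_option maxHeartbeats 1000000 in
lemma hPsi'_cont (t : ℝ) : Continuous (Psi' Φ' t) := by
  unfold Psi'
  have hEz : Continuous fun z => EE Φ' t z :=
    (hEE_cont hΦ).comp (continuous_const.prodMk continuous_id)
  apply Continuous.mul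
  · have h1 := hEz.comp (hHH_cont hΦ)
    exact Continuous.div_const (by simpa [Function.comp_def] using h1) _
  · apply Continuous.inv₀
    · have h2 := Real.continuous_exp.comp ((huu_cont hΦ).comp (hHH_cont hΦ))
      exact Continuous.div_const (by simpa [Function.comp_def] using h2) _
    · intro y; exact ne_of_gt (div_pos (Real.exp_pos _) (hcc_pos hΦ))

lemma hPsi'_pos (t y : ℝ) : 0 < Psi' Φ' t y := by
  rw [Psi']
  exact mul_pos (div_pos (hEE_pos _ _) (hcc_pos hΦ))
    (inv_pos.2 (div_pos (Real.exp_pos _) (hcc_pos hΦ)))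

lemma hlogPsi' (t y : ℝ) : Real.log (Psi' Φ' t y) =
    (∫ σ in t..(t+1), Lg Φ' σ (HH Φ' y)) +
      Real.log ((Real.exp (uu Φ' (HH Φ' y)) / cc Φ')⁻¹) - Real.log (cc Φ') := by
  rw [Psi', Real.log_mul (ne_of_gt (div_pos (hEE_pos _ _) (hcc_pos hΦ)))
      (ne_of_gt (inv_pos.2 (div_pos (Real.exp_pos _) (hcc_pos hΦ)))),
    Real.log_div (ne_of_gt (hEE_pos _ _)) (ne_of_gt (hcc_pos hΦ)), hEE_log]
  ring

lemma hPsi_C1cont (t₀ : ℝ) (K : Set ℝ) (_hK : IsCompact K) (hKs : K ⊆ Icc (0:ℝ) 1)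
    {ε : ℝ} (hε : 0 < ε) : ∃ δ > (0:ℝ), ∀ t : ℝ, |t - t₀| < δ → ∀ y ∈ K,
      |Psi Φ' t y - Psi Φ' t₀ y| + |Real.log (Psi' Φ' t y) - Real.log (Psi' Φ' t₀ y)| < ε := by
  have hc := hcc_pos hΦ
  have hε₁ : 0 < ε / 4 * cc Φ' := by positivity
  obtain ⟨δ₁, hδ₁, hd₁⟩ := unif_of_cont _ (hEE_cont hΦ) t₀ hε₁
  obtain ⟨δ₂, hδ₂, hd₂⟩ := unif_of_cont _ (hII_cont hΦ) t₀ (show (0:ℝ) < ε/4 by linarith)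
  refine ⟨min δ₁ δ₂, lt_min hδ₁ hδ₂, fun t ht y hy => ?_⟩
  have hyI : y ∈ Icc (0:ℝ) 1 := hKs hy
  have hw : HH Φ' y ∈ Icc (0:ℝ) 1 := hHH_mem hΦ hyI
  have ht₁ : |t - t₀| < δ₁ := lt_of_lt_of_le ht (min_le_left _ _)
  have ht₂ : |t - t₀| < δ₂ := lt_of_lt_of_le ht (min_le_right _ _)
  -- first part: the C⁰ distance
  have h1 : |Psi Φ' t y - Psi Φ' t₀ y| ≤ ε / 4 := by
    rw [Psi, if_pos hyI, Psi, if_pos hyI, div_sub_div_same, abs_div, abs_of_pos hc]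
    rw [div_le_iff₀ hc]
    have hintt : IntervalIntegrable (fun z => EE Φ' t z) volume 0 (HH Φ' y) :=
      (((hEE_cont hΦ).comp (continuous_const.prodMk continuous_id)).intervalIntegrable _ _)
    have hintt₀ : IntervalIntegrable (fun z => EE Φ' t₀ z) volume 0 (HH Φ' y) :=
      (((hEE_cont hΦ).comp (continuous_const.prodMk continuous_id)).intervalIntegrable _ _)
    rw [← intervalIntegral.integral_sub hintt hintt₀]
    have hbd : ∀ z ∈ Set.uIoc (0:ℝ) (HH Φ' y), ‖EE Φ' t z - EE Φ' t₀ z‖ ≤ ε / 4 * cc Φ' := by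
      intro z hz
      rw [uIoc_of_le hw.1] at hz
      have hz1 : z ∈ Icc (0:ℝ) 1 := ⟨hz.1.le, hz.2.trans hw.2⟩
      exact (hd₁ t ht₁ z hz1).le
    have hnorm := intervalIntegral.norm_integral_le_of_norm_le_const hbd
    rw [Real.norm_eq_abs] at hnorm
    calc |∫ z in (0:ℝ)..(HH Φ' y), (EE Φ' t z - EE Φ' t₀ z)|
        ≤ ε / 4 * cc Φ' * |HH Φ' y - 0| := hnorm
      _ ≤ ε / 4 * cc Φ' * 1 := by
          apply mul_le_mul_of_nonneg_left _ (by positivity)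
          rw [sub_zero, abs_of_nonneg hw.1]; exact hw.2
      _ = ε / 4 * cc Φ' := by ring
  -- second part: the log-derivative distance
  have h2 : |Real.log (Psi' Φ' t y) - Real.log (Psi' Φ' t₀ y)| < ε / 4 := by
    have heq : Real.log (Psi' Φ' t y) - Real.log (Psi' Φ' t₀ y) =
        (∫ σ in t..(t+1), Lg Φ' σ (HH Φ' y)) - ∫ σ in t₀..(t₀+1), Lg Φ' σ (HH Φ' y) := by
      rw [hlogPsi' hΦ, hlogPsi' hΦ]; ring
    rw [heq]
    exact hd₂ t ht₂ (HH Φ' y) hw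
  linarith [h1, h2]

end Lemmas3

section Lemmas4
open Reg
variable {Φ Φ' : ℝ → ℝ → ℝ} (hΦ : IsC1FlowOn (Icc (0:ℝ) 1) Φ Φ')

include hΦ

lemma hgX_cont : Continuous fun z => Real.exp (uu Φ' z) * Lg Φ' 1 z :=
  (Real.continuous_exp.comp (huu_cont hΦ)).mul
    ((hLg_cont hΦ).comp (continuous_const.prodMk continuous_id))

lemma hXX_deriv (y : ℝ) : HasDerivAt (XX Φ') (XX' Φ' y) y := by
  have hg : Continuous fun z => Real.exp (uu Φ' z) * Lg Φ' 1 z := hgX_cont hΦ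
  have hA : ∀ w : ℝ, HasDerivAt
      (fun w => (∫ z in (0:ℝ)..w, Real.exp (uu Φ' z) * Lg Φ' 1 z) / cc Φ')
      ((Real.exp (uu Φ' w) * Lg Φ' 1 w) / cc Φ') w := fun w =>
    (intervalIntegral.integral_hasDerivAt_right (hg.intervalIntegrable _ _)
      (hg.stronglyMeasurableAtFilter _ _) hg.continuousAt).div_const _
  have hcomp0 := HasDerivAt.comp y (hA (HH Φ' y)) (hHH_deriv hΦ y)
  have hval : (Real.exp (uu Φ' (HH Φ' y)) * Lg Φ' 1 (HH Φ' y)) / cc Φ' *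
      (Real.exp (uu Φ' (HH Φ' y)) / cc Φ')⁻¹ = XX' Φ' y := by
    rw [XX']
    have h1 : Real.exp (uu Φ' (HH Φ' y)) ≠ 0 := ne_of_gt (Real.exp_pos _)
    have h2 : cc Φ' ≠ 0 := ne_of_gt (hcc_pos hΦ)
    field_simp
  rw [← hval]
  have hfun : XX Φ' =
      (fun w => (∫ z in (0:ℝ)..w, Real.exp (uu Φ' z) * Lg Φ' 1 z) / cc Φ') ∘ HH Φ' := by
    funext y; rw [XX]; rfl
  rw [hfun]
  exact hcomp0

lemma hXX'_cont : Continuous (XX' Φ') := by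
  unfold XX'
  exact (hLg_cont hΦ).comp (continuous_const.prodMk (hHH_cont hΦ))

/-- time derivative of `EE` -/
lemma hEE_t_deriv (z τ : ℝ) : HasDerivAt (fun τ => EE Φ' τ z)
    (EE Φ' τ z * (Lg Φ' (τ+1) z - Lg Φ' τ z)) τ := by
  have hLz : Continuous fun σ => Lg Φ' σ z :=
    (hLg_cont hΦ).comp (continuous_id.prodMk continuous_const)
  have hQd : ∀ b : ℝ, HasDerivAt (fun b => ∫ σ in (0:ℝ)..b, Lg Φ' σ z) (Lg Φ' b z) b :=
    fun b => intervalIntegral.integral_hasDerivAt_right (hLz.intervalIntegrable _ _)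
      (hLz.stronglyMeasurableAtFilter _ _) hLz.continuousAt
  have hint : ∀ a : ℝ, (∫ σ in a..(a+1), Lg Φ' σ z) =
      (∫ σ in (0:ℝ)..(a+1), Lg Φ' σ z) - ∫ σ in (0:ℝ)..a, Lg Φ' σ z := by
    intro a
    rw [intervalIntegral.integral_interval_sub_left] <;> exact hLz.intervalIntegrable _ _
  have h1 : HasDerivAt (fun τ : ℝ => ∫ σ in (0:ℝ)..(τ+1), Lg Φ' σ z) (Lg Φ' (τ+1) z) τ := by
    have := HasDerivAt.comp τ (hQd (τ+1)) ((hasDerivAt_id τ).add_const 1)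
    simpa [Function.comp_def] using this
  have h2 := (h1.sub (hQd τ)).exp
  have hfun : (fun τ => EE Φ' τ z) = fun τ =>
      Real.exp ((∫ σ in (0:ℝ)..(τ+1), Lg Φ' σ z) - ∫ σ in (0:ℝ)..τ, Lg Φ' σ z) := by
    funext τ; rw [EE, hint]
  rw [hfun]
  have hval : EE Φ' τ z = Real.exp ((∫ σ in (0:ℝ)..(τ+1), Lg Φ' σ z)
      - ∫ σ in (0:ℝ)..τ, Lg Φ' σ z) := by rw [EE, hint]
  rw [hval]
  exact h2

/-- cocycle for `Lg` at time shift 1 -/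
lemma hLg_coc (t : ℝ) {z : ℝ} (hz : z ∈ Icc (0:ℝ) 1) :
    Lg Φ' (t+1) z - Lg Φ' t z = Lg Φ' 1 (Φ t z) := by
  have hmem := mapsToPhi hΦ t hz
  have hc := cocycle hΦ 1 t hz
  simp only [Lg, pj_eq hz, pj_eq hmem]
  rw [add_comm t 1, hc, Real.log_mul (ne_of_gt (hΦ.2.2.2.2.2.2.1 1 _ hmem))
    (ne_of_gt (hΦ.2.2.2.2.2.2.1 t z hz))]
  ring

/-- `X` generates the flow `Psi`. -/
lemma hGen (t : ℝ) {x : ℝ} (hx : x ∈ Icc (0:ℝ) 1) :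
    HasDerivAt (fun τ => Psi Φ' τ x) (XX Φ' (Psi Φ' t x)) t := by
  set w := HH Φ' x with hw_def
  have hw : w ∈ Icc (0:ℝ) 1 := hHH_mem hΦ hx
  have h0w : (0:ℝ) ≤ w := hw.1
  -- the function as an integral
  have hfun : (fun τ => Psi Φ' τ x) = fun τ => (∫ z in (0:ℝ)..w, EE Φ' τ z) / cc Φ' := by
    funext τ; rw [Psi, if_pos hx]
  -- derivative of the parametrized integral
  have hEcont : Continuous fun p : ℝ × ℝ => EE Φ' p.1 p.2 := hEE_cont hΦ
  have hF'cont : Continuous fun p : ℝ × ℝ =>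
      EE Φ' p.1 p.2 * (Lg Φ' (p.1 + 1) p.2 - Lg Φ' p.1 p.2) := by
    apply hEcont.mul
    apply Continuous.sub
    · exact (hLg_cont hΦ).comp ((continuous_fst.add continuous_const).prodMk continuous_snd)
    · exact hLg_cont hΦ
  obtain ⟨M, hM⟩ := (isCompact_Icc.prod isCompact_Icc :
      IsCompact (Icc (t-1) (t+1) ×ˢ Icc (0:ℝ) w)).exists_bound_of_continuousOn
    hF'cont.continuousOn
  have hder : HasDerivAt (fun τ => ∫ z in (Ioc (0:ℝ) w), EE Φ' τ z)
      (∫ z in (Ioc (0:ℝ) w), EE Φ' t z * (Lg Φ' (t + 1) z - Lg Φ' t z)) t := by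
    have hmain := hasDerivAt_integral_of_dominated_loc_of_deriv_le
      (μ := volume.restrict (Ioc (0:ℝ) w)) (x₀ := t)
      (F := fun τ z => EE Φ' τ z)
      (F' := fun τ z => EE Φ' τ z * (Lg Φ' (τ + 1) z - Lg Φ' τ z))
      (bound := fun _ => M) (Metric.ball_mem_nhds t one_pos)
      (Filter.Eventually.of_forall fun τ =>
        ((hEcont.comp (continuous_const.prodMk continuous_id)).aestronglyMeasurable))
      ((hEcont.comp (continuous_const.prodMk continuous_id)).intervalIntegrable 0 w).1
      ((hF'cont.comp (continuous_const.prodMk continuous_id)).aestronglyMeasurable)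
      ?_ ?_ ?_
    · exact hmain.2
    · filter_upwards [ae_restrict_mem measurableSet_Ioc] with z hz
      intro τ hτ
      have hτI : τ ∈ Icc (t-1) (t+1) := by
        rw [Metric.mem_ball, Real.dist_eq, abs_lt] at hτ
        exact ⟨by linarith [hτ.1], by linarith [hτ.2]⟩
      exact hM (τ, z) ⟨hτI, Ioc_subset_Icc_self hz⟩
    · have hic : IntegrableOn (fun _ : ℝ => M) (Ioc (0:ℝ) w) volume :=
        integrableOn_const measure_Ioc_lt_top.ne
      exact hic
    · filter_upwards with z
      intro τ _
      exact hEE_t_deriv hΦ z τ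
  -- identify the derivative with X (Psi t x)
  have hXval : XX Φ' (Psi Φ' t x) =
      (∫ z in (0:ℝ)..w, EE Φ' t z * (Lg Φ' (t + 1) z - Lg Φ' t z)) / cc Φ' := by
    have hHPsi : HH Φ' (Psi Φ' t x) = Φ t w := by
      rw [hPsi_repr hΦ t hx, ← hw_def, hHG hΦ]
    rw [XX, hHPsi, keyCV hΦ t (fun y => Real.exp (uu Φ' y) * Lg Φ' 1 y) (hgX_cont hΦ) hw]
    congr 1
    apply intervalIntegral.integral_congr
    intro z hz
    rw [uIcc_of_le h0w] at hz
    have hz1 : z ∈ Icc (0:ℝ) 1 := ⟨hz.1, hz.2.trans hw.2⟩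
    have hE := hEE_eq hΦ t hz1
    have hL := hLg_coc hΦ t hz1
    simp only [smul_eq_mul]
    rw [hL, ← hE]
    ring
  rw [hfun, hXval]
  have hconv : (fun τ => (∫ z in (0:ℝ)..w, EE Φ' τ z) / cc Φ') =
      fun τ => (∫ z in (Ioc (0:ℝ) w), EE Φ' τ z) / cc Φ' := by
    funext τ
    rw [intervalIntegral.integral_of_le h0w]
  rw [hconv, intervalIntegral.integral_of_le h0w]
  exact HasDerivAt.div_const (by exact hder) _

end Lemmas4

section Final
open Reg
variable {Φ Φ' : ℝ → ℝ → ℝ} (hΦ : IsC1FlowOn (Icc (0:ℝ) 1) Φ Φ')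

include hΦ

lemma hVar : eVariationOn (XX' Φ') (Icc (0:ℝ) 1) =
    eVariationOn (fun x => Real.log (Φ' 1 x)) (Icc (0:ℝ) 1) := by
  have hXXfun : XX' Φ' = (fun z => Lg Φ' 1 z) ∘ HH Φ' := funext fun y => by rw [XX']; rfl
  rw [hXXfun, eVariationOn.comp_eq_of_monotoneOn (fun z => Lg Φ' 1 z) (HH Φ')
    ((hHH_mono hΦ).monotone.monotoneOn _)]
  have himg : HH Φ' '' Icc (0:ℝ) 1 = Icc (0:ℝ) 1 := by
    rw [hHH_image hΦ, hHH_zero hΦ, hHH_one hΦ]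
  rw [himg]
  apply eVariationOn.eq_of_eqOn
  intro z hz
  simp only [Lg, pj_eq hz]

lemma hAC (h : ℝ → ℝ) (hint : IntegrableOn h (Icc (0:ℝ) 1))
    (hrepr : ∀ x ∈ Icc (0:ℝ) 1, Real.log (Φ' 1 x) = Real.log (Φ' 1 0) + ∫ s in (0:ℝ)..x, h s) :
    ∃ h' : ℝ → ℝ, IntegrableOn h' (Icc (0:ℝ) 1) ∧ ∀ y ∈ Icc (0:ℝ) 1,
      XX' Φ' y = XX' Φ' 0 + ∫ s in (0:ℝ)..y, h' s := by
  set D : ℝ → ℝ := fun s => (Real.exp (uu Φ' (HH Φ' s)) / cc Φ')⁻¹ with hD_def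
  refine ⟨fun s => |D s| • h (HH Φ' s), ?_, ?_⟩
  · have hiff := integrableOn_image_iff_integrableOn_abs_deriv_smul (s := Icc (0:ℝ) 1) (f := HH Φ') (f' := D)
      measurableSet_Icc (fun x _ => (hHH_deriv hΦ x).hasDerivWithinAt)
      ((hHH_mono hΦ).injective.injOn) h
    rw [hHH_image hΦ, hHH_zero hΦ, hHH_one hΦ] at hiff
    exact hiff.1 hint
  · intro y hy
    have hHy : HH Φ' y ∈ Icc (0:ℝ) 1 := hHH_mem hΦ hy
    have hX0 : XX' Φ' 0 = Real.log (Φ' 1 0) := by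
      rw [XX', hHH_zero hΦ, Lg, pj_eq (by norm_num : (0:ℝ) ∈ Icc (0:ℝ) 1)]
    have hXy : XX' Φ' y = Real.log (Φ' 1 0) + ∫ s in (0:ℝ)..(HH Φ' y), h s := by
      rw [XX', Lg, pj_eq hHy]
      exact hrepr _ hHy
    rw [hXy, hX0]
    congr 1
    -- change of variables
    have hCV := integral_image_eq_integral_abs_deriv_smul (s := Icc (0:ℝ) y) (f := HH Φ') (f' := D)
      (measurableSet_Icc : MeasurableSet (Icc (0:ℝ) y))
      (fun x _ => (hHH_deriv hΦ x).hasDerivWithinAt) ((hHH_mono hΦ).injective.injOn) h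
    rw [hHH_image hΦ, hHH_zero hΦ] at hCV
    rw [intervalIntegral.integral_of_le hHy.1, intervalIntegral.integral_of_le hy.1,
      ← integral_Icc_eq_integral_Ioc, ← integral_Icc_eq_integral_Ioc]
    exact hCV

lemma hPhiDiffeoDeriv {x : ℝ} (hx : x ∈ Icc (0:ℝ) 1) :
    HasDerivWithinAt (fun x => if x ∈ Icc (0:ℝ) 1 then GG Φ' x else x)
      (Real.exp (uu Φ' x) / cc Φ') (Icc (0:ℝ) 1) x := by
  refine ((hGG_deriv hΦ x).hasDerivWithinAt).congr ?_ ?_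
  · intro z hz; rw [if_pos hz]
  · rw [if_pos hx]

lemma hConj (t x : ℝ) :
    Psi Φ' t (if x ∈ Icc (0:ℝ) 1 then GG Φ' x else x) =
      (if Φ t x ∈ Icc (0:ℝ) 1 then GG Φ' (Φ t x) else Φ t x) := by
  by_cases hx : x ∈ Icc (0:ℝ) 1
  · rw [if_pos hx, if_pos (mapsToPhi hΦ t hx), hPsi_repr hΦ t (hGG_mem hΦ hx), hHG hΦ]
  · rw [if_neg hx, hΦ.2.2.1 t x hx, if_neg hx, hPsi_out t x hx]

end Final

/-- **Regularization Lemma.** If `(fᵗ) = Φ` is a `C¹` flow of diffeomorphisms of `[0,1]` whose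
time-1 map `f = Φ 1` is of class `Cʳ`, `r ∈ {1, 1+bv, 1+ac}`, then it is conjugated by an
orientation-preserving `C¹` diffeomorphism `φ` to the flow `Ψ` of a `Cʳ` vector field `X`
satisfying `var(DX) = var(log Df)` (an equality in `ℝ≥0∞`, so this covers both the `C¹` and
the `C^{1+bv}` cases at once; the final implication is the `C^{1+ac}` case). -/
theorem regularization_lemma (Φ Φ' : ℝ → ℝ → ℝ)
    (hΦ : IsC1FlowOn (Icc (0:ℝ) 1) Φ Φ') :
    ∃ φ : C1Diffeo, ∃ Ψ Ψ' : ℝ → ℝ → ℝ, ∃ X X' : ℝ → ℝ,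
      IsC1FlowOn (Icc (0:ℝ) 1) Ψ Ψ' ∧
      -- `φ` conjugates the flow `Φ` to the flow `Ψ`
      (∀ t : ℝ, ∀ x : ℝ, Ψ t (φ.toFun x) = φ.toFun (Φ t x)) ∧
      -- `X` is a `C¹` vector field, with derivative `X'`
      (∀ x ∈ Icc (0:ℝ) 1, HasDerivWithinAt X (X' x) (Icc (0:ℝ) 1) x) ∧
      ContinuousOn X' (Icc (0:ℝ) 1) ∧
      -- `X` generates the flow `Ψ`
      (∀ x ∈ Icc (0:ℝ) 1, ∀ t : ℝ, HasDerivAt (fun τ => Ψ τ x) (X (Ψ t x)) t) ∧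
      -- `var(DX) = var(log Df)` where `f = Φ 1` is the time-1 map
      eVariationOn X' (Icc (0:ℝ) 1) =
        eVariationOn (fun x => Real.log (Φ' 1 x)) (Icc (0:ℝ) 1) ∧
      -- if `f` is moreover `C^{1+ac}` then so is the vector field `X`
      ((∃ h : ℝ → ℝ, IntegrableOn h (Icc (0:ℝ) 1) ∧ ∀ x ∈ Icc (0:ℝ) 1,
          Real.log (Φ' 1 x) = Real.log (Φ' 1 0) + ∫ s in (0:ℝ)..x, h s) →
        (∃ h : ℝ → ℝ, IntegrableOn h (Icc (0:ℝ) 1) ∧ ∀ x ∈ Icc (0:ℝ) 1,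
          X' x = X' 0 + ∫ s in (0:ℝ)..x, h s)) := by
  classical
  refine ⟨⟨fun x => if x ∈ Icc (0:ℝ) 1 then Reg.GG Φ' x else x,
      fun x => Real.exp (Reg.uu Φ' x) / Reg.cc Φ',
      ?_, ?_, ?_, ?_, ?_, ?_, ?_⟩,
    Reg.Psi Φ', Reg.Psi' Φ', Reg.XX Φ', Reg.XX' Φ', ?_, ?_, ?_, ?_, ?_, ?_, ?_⟩
  · show (if (0:ℝ) ∈ Icc (0:ℝ) 1 then Reg.GG Φ' 0 else (0:ℝ)) = 0
    rw [if_pos (show (0:ℝ) ∈ Icc (0:ℝ) 1 by norm_num)]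
    exact hGG_zero
  · show (if (1:ℝ) ∈ Icc (0:ℝ) 1 then Reg.GG Φ' 1 else (1:ℝ)) = 1
    rw [if_pos (show (1:ℝ) ∈ Icc (0:ℝ) 1 by norm_num)]
    exact hGG_one hΦ
  · exact fun x hx => if_neg hx
  · exact (hGG_bijOn hΦ).congr (fun x hx => (if_pos hx).symm)
  · exact fun x hx => hPhiDiffeoDeriv hΦ hx
  · exact ((Real.continuous_exp.comp (huu_cont hΦ)).div_const _).continuousOn
  · exact fun x _ => div_pos (Real.exp_pos _) (hcc_pos hΦ)
  · exact ⟨hPsi_zero hΦ, hPsi_group hΦ, fun t x hx => hPsi_out t x hx, hPsi_bijOn hΦ,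
      fun t x hx => hPsi_hasDeriv hΦ t hx, fun t => (hPsi'_cont hΦ t).continuousOn,
      fun t x _ => hPsi'_pos hΦ t x,
      fun t₀ K hK hKs ε hε => hPsi_C1cont hΦ t₀ K hK hKs hε⟩
  · exact fun t x => hConj hΦ t x
  · exact fun x _ => (hXX_deriv hΦ x).hasDerivWithinAt
  · exact (hXX'_cont hΦ).continuousOn
  · exact fun x hx t => hGen hΦ t hx
  · exact hVar hΦ
  · rintro ⟨h, hint, hrepr⟩
    exact hAC hΦ h hint hrepr
end
end

section
/- Let X be a C^{1+ac} vector field on [0,1] (vanishing at the endpoints), and let (f^t) be its flow. Then (f^t) is a C^{1+ac} flow, i.e. each f^t is a C^{1+ac} diffeomorphism and the map t ↦ f^t is continuous from R into the C^{1+ac} diffeomorphisms; moreover var(log Df^t) ≤ |t|·var(DX) for every t ∈ R. -/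
set_option maxHeartbeats 1000000


open Set MeasureTheory Filter Topology

noncomputable section

lemma aux_gronwall {K : ℝ} :
    ∀ (u U : ℝ → ℝ), (∀ s, HasDerivAt u (U s) s) → (∀ s, |U s| ≤ K * |u s|) →
    ∀ t : ℝ, |u t| ≤ Real.exp (K * |t|) * |u 0| := by
  have key : ∀ (u U : ℝ → ℝ), (∀ s, HasDerivAt u (U s) s) → (∀ s, |U s| ≤ K * |u s|) →
      ∀ t : ℝ, 0 ≤ t → |u t| ≤ Real.exp (K * t) * |u 0| := by
    intro u U hu hb t ht
    have h := norm_le_gronwallBound_of_norm_deriv_right_le (f := u) (f' := U)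
      (δ := |u 0|) (K := K) (ε := 0) (a := 0) (b := t)
      (fun s _ => (hu s).continuousAt.continuousWithinAt)
      (fun s _ => (hu s).hasDerivWithinAt)
      (by simp [Real.norm_eq_abs])
      (fun s _ => by simpa [Real.norm_eq_abs] using hb s)
      t ⟨ht, le_rfl⟩
    rw [gronwallBound_ε0] at h
    simpa [Real.norm_eq_abs, sub_zero, mul_comm] using h
  intro u U hu hb t
  rcases le_total 0 t with ht | ht
  · simpa [abs_of_nonneg ht] using key u U hu hb t ht
  · have hu' : ∀ s, HasDerivAt (fun s => u (-s)) (U (-s) * (-1)) s := by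
      intro s
      exact (hu (-s)).comp s (hasDerivAt_neg s)
    have hb' : ∀ s, |U (-s) * (-1)| ≤ K * |u (-s)| := by
      intro s; simpa using hb (-s)
    have := key (fun s => u (-s)) (fun s => U (-s) * (-1)) hu' hb' (-t) (by linarith)
    simpa [abs_of_nonpos ht] using this


/-- A `C^{1+ac}` diffeomorphism of `[0,1]`: a `C¹` diffeomorphism whose logarithmic derivative
`log Df` is absolutely continuous, i.e. the primitive of an `L¹` density `dlog = D (log Df)`. -/
structure C1acDiffeo extends C1Diffeo where
  dlog : ℝ → ℝ
  dlog_int : IntegrableOn dlog (Icc (0:ℝ) 1)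
  dlog_prim : ∀ x ∈ Icc (0:ℝ) 1,
    Real.log (derivFun x) = Real.log (derivFun 0) + ∫ t in (0:ℝ)..x, dlog t

/-- The uniform (`C⁰`) distance over `[0,1]`. -/
def supDist01 (f g : ℝ → ℝ) : ℝ := ⨆ x : Icc (0:ℝ) 1, |f (x : ℝ) - g (x : ℝ)|

/-- The `C^{1+ac}` distance `‖f-g‖_∞ + ‖D(log Df - log Dg)‖_{L¹}`. -/
def dist1ac (f g : C1acDiffeo) : ℝ :=
  supDist01 f.toFun g.toFun + ∫ x in Icc (0:ℝ) 1, |f.dlog x - g.dlog x|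


/-- If `X` is a `C^{1+ac}` vector field on `[0,1]` (vanishing at the endpoints), with
derivative `X'` admitting the `L¹` density `h` (so that `var(DX) = ‖h‖_{L¹}`), then its flow
`Φ` is a `C^{1+ac}` flow: each time-`t` map is a `C^{1+ac}` diffeomorphism, `t ↦ Φ t` is
continuous for the `C^{1+ac}` topology, and `var(log DΦᵗ) ≤ |t| · var(DX)`. -/
theorem flow_of_C1ac_vector_field_is_C1ac_flow
    (X X' h : ℝ → ℝ) (Φ : ℝ → ℝ → ℝ)
    (hX0 : X 0 = 0) (hX1 : X 1 = 0)
    (hXderiv : ∀ x ∈ Icc (0:ℝ) 1, HasDerivWithinAt X (X' x) (Icc (0:ℝ) 1) x)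
    (hX'cont : ContinuousOn X' (Icc (0:ℝ) 1))
    (hhInt : IntegrableOn h (Icc (0:ℝ) 1))
    (hprim : ∀ x ∈ Icc (0:ℝ) 1, X' x = X' 0 + ∫ t in (0:ℝ)..x, h t)
    -- `Φ` is the flow of `X`
    (hΦzero : ∀ x : ℝ, Φ 0 x = x)
    (hΦadd : ∀ s t : ℝ, ∀ x : ℝ, Φ (s + t) x = Φ s (Φ t x))
    (hΦout : ∀ t : ℝ, ∀ x ∉ Icc (0:ℝ) 1, Φ t x = x)
    (hΦode : ∀ x ∈ Icc (0:ℝ) 1, ∀ t : ℝ, HasDerivAt (fun τ => Φ τ x) (X (Φ t x)) t) :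
    ∃ F : ℝ → C1acDiffeo,
      (∀ t : ℝ, ∀ x : ℝ, (F t).toFun x = Φ t x) ∧
      -- `var(log DΦᵗ) ≤ |t| · var(DX)`
      (∀ t : ℝ, (∫ x in Icc (0:ℝ) 1, |(F t).dlog x|) ≤ |t| * ∫ x in Icc (0:ℝ) 1, |h x|) ∧
      -- `t ↦ Φᵗ` is continuous in the `C^{1+ac}` topology
      (∀ t₀ : ℝ, ∀ ε > (0:ℝ), ∃ δ > (0:ℝ), ∀ t : ℝ, |t - t₀| < δ →
        dist1ac (F t) (F t₀) < ε) := by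
  have h0I : (0:ℝ) ∈ Icc (0:ℝ) 1 := ⟨le_rfl, zero_le_one⟩
  have h1I : (1:ℝ) ∈ Icc (0:ℝ) 1 := ⟨zero_le_one, le_rfl⟩
  have hXcont : ContinuousOn X (Icc (0:ℝ) 1) :=
    fun x hx => (hXderiv x hx).continuousWithinAt
  -- bound on X'
  obtain ⟨K₀, hK₀⟩ := (isCompact_Icc (a := (0:ℝ)) (b := 1)).exists_bound_of_continuousOn hX'cont
  set K : ℝ := max K₀ 0 with hKdef
  have hK0 : 0 ≤ K := le_max_right _ _
  have hK : ∀ x ∈ Icc (0:ℝ) 1, |X' x| ≤ K :=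
    fun x hx => le_trans (by simpa [Real.norm_eq_abs] using hK₀ x hx) (le_max_left _ _)
  -- Lipschitz bound on X
  have hlip : ∀ a ∈ Icc (0:ℝ) 1, ∀ b ∈ Icc (0:ℝ) 1, |X b - X a| ≤ K * |b - a| := by
    intro a ha b hb
    have := Convex.norm_image_sub_le_of_norm_hasDerivWithin_le
      (f := X) (f' := X') (C := K) (s := Icc (0:ℝ) 1) hXderiv
      (fun x hx => by simpa [Real.norm_eq_abs] using hK x hx) (convex_Icc _ _) ha hb
    simpa [Real.norm_eq_abs] using this
  -- inverse identities
  have hinv : ∀ t x : ℝ, Φ (-t) (Φ t x) = x := by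
    intro t x
    rw [← hΦadd]; simp [hΦzero]
  have hinv' : ∀ t x : ℝ, Φ t (Φ (-t) x) = x := by
    intro t x
    have := hinv (-t) x
    simpa using this
  -- invariance
  have hmaps : ∀ t : ℝ, MapsTo (Φ t) (Icc (0:ℝ) 1) (Icc (0:ℝ) 1) := by
    intro t x hx
    by_contra hout
    have h1 : Φ (-t) (Φ t x) = Φ t x := hΦout (-t) _ hout
    rw [hinv t x] at h1
    exact hout (h1 ▸ hx)
  -- two-sided Gronwall estimate for pairs of trajectories
  have hgron : ∀ (t : ℝ), ∀ x ∈ Icc (0:ℝ) 1, ∀ y ∈ Icc (0:ℝ) 1,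
      |Φ t y - Φ t x| ≤ Real.exp (K * |t|) * |y - x| := by
    intro t x hx y hy
    have hu : ∀ s, HasDerivAt (fun s => Φ s y - Φ s x) (X (Φ s y) - X (Φ s x)) s :=
      fun s => (hΦode y hy s).sub (hΦode x hx s)
    have hb : ∀ s, |X (Φ s y) - X (Φ s x)| ≤ K * |Φ s y - Φ s x| :=
      fun s => hlip _ (hmaps s hx) _ (hmaps s hy)
    simpa [hΦzero] using aux_gronwall (fun s => Φ s y - Φ s x) _ hu hb t
  -- endpoints are fixed
  have hfix0 : ∀ t : ℝ, Φ t 0 = 0 := by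
    intro t
    have hu : ∀ s, HasDerivAt (fun s => Φ s 0) (X (Φ s 0)) s := fun s => hΦode 0 h0I s
    have hb : ∀ s, |X (Φ s 0)| ≤ K * |Φ s 0| := by
      intro s
      have := hlip 0 h0I (Φ s 0) (hmaps s h0I)
      simpa [hX0] using this
    have h2 := aux_gronwall (fun s => Φ s 0) _ hu hb t
    rw [hΦzero] at h2
    simp only [abs_zero, mul_zero] at h2
    exact abs_eq_zero.mp (le_antisymm h2 (abs_nonneg _))
  have hfix1 : ∀ t : ℝ, Φ t 1 = 1 := by
    intro t
    have hu : ∀ s, HasDerivAt (fun s => Φ s 1 - 1) (X (Φ s 1)) s := by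
      intro s
      simpa using (hΦode 1 h1I s).sub_const 1
    have hb : ∀ s, |X (Φ s 1)| ≤ K * |Φ s 1 - 1| := by
      intro s
      have := hlip 1 h1I (Φ s 1) (hmaps s h1I)
      simpa [hX1] using this
    have := aux_gronwall (fun s => Φ s 1 - 1) _ hu hb t
    rw [hΦzero] at this
    have h2 : |Φ t 1 - 1| = 0 := le_antisymm (by simpa using this) (abs_nonneg _)
    have := abs_eq_zero.mp h2
    linarith
  -- injectivity and bijectivity
  have hinj : ∀ t : ℝ, InjOn (Φ t) (Icc (0:ℝ) 1) := by
    intro t x _ y _ hxy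
    have := congrArg (Φ (-t)) hxy
    rwa [hinv, hinv] at this
  have hbij : ∀ t : ℝ, BijOn (Φ t) (Icc (0:ℝ) 1) (Icc (0:ℝ) 1) := by
    intro t
    exact Set.InvOn.bijOn (f' := Φ (-t)) ⟨fun x _ => hinv t x, fun x _ => hinv' t x⟩
      (hmaps t) (hmaps (-t))
  -- continuity in x (Lipschitz)
  have hcontx : ∀ t : ℝ, ContinuousOn (Φ t) (Icc (0:ℝ) 1) := by
    intro t
    have : LipschitzOnWith (Real.toNNReal (Real.exp (K * |t|))) (Φ t) (Icc (0:ℝ) 1) := by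
      apply LipschitzOnWith.of_dist_le_mul
      intro x hx y hy
      rw [Real.dist_eq, Real.dist_eq]
      have := hgron t y hy x hx
      rwa [Real.coe_toNNReal _ (Real.exp_pos _).le]
    exact this.continuousOn
  -- monotonicity
  have hmono : ∀ t : ℝ, MonotoneOn (Φ t) (Icc (0:ℝ) 1) := by
    intro t
    exact ((hcontx t).strictMonoOn_of_injOn_Icc zero_le_one
      (by rw [hfix0, hfix1]; exact zero_le_one) (hinj t)).monotoneOn
  -- bound on X and Lipschitz in time
  obtain ⟨M₀, hM₀⟩ := (isCompact_Icc (a := (0:ℝ)) (b := 1)).exists_bound_of_continuousOn hXcont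
  set M : ℝ := max M₀ 0 with hMdef
  have hM0 : 0 ≤ M := le_max_right _ _
  have hM : ∀ x ∈ Icc (0:ℝ) 1, |X x| ≤ M :=
    fun x hx => le_trans (by simpa [Real.norm_eq_abs] using hM₀ x hx) (le_max_left _ _)
  have htime : ∀ x ∈ Icc (0:ℝ) 1, ∀ t t' : ℝ, |Φ t x - Φ t' x| ≤ M * |t - t'| := by
    intro x hx t t'
    have := Convex.norm_image_sub_le_of_norm_hasDerivWithin_le
      (f := fun τ => Φ τ x) (f' := fun τ => X (Φ τ x)) (C := M) (s := univ)
      (fun τ _ => (hΦode x hx τ).hasDerivWithinAt)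
      (fun τ _ => by simpa [Real.norm_eq_abs] using hM _ (hmaps τ hx))
      convex_univ (mem_univ t') (mem_univ t)
    simpa [Real.norm_eq_abs] using this
  -- retraction onto the interval
  set π : ℝ → ℝ := fun x => max 0 (min 1 x) with hπdef
  have hπmem : ∀ x : ℝ, π x ∈ Icc (0:ℝ) 1 :=
    fun x => ⟨le_max_left _ _, max_le zero_le_one (min_le_left _ _)⟩
  have hπid : ∀ x ∈ Icc (0:ℝ) 1, π x = x := by
    intro x hx
    simp [hπdef, min_eq_right hx.2, max_eq_right hx.1]
  have hπlip : ∀ x y : ℝ, |π y - π x| ≤ |y - x| := by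
    intro x y
    calc |π y - π x| = |max (min 1 y) 0 - max (min 1 x) 0| := by
          rw [hπdef]; simp [max_comm]
      _ ≤ |min 1 y - min 1 x| := abs_max_sub_max_le_abs _ _ _
      _ ≤ max |(1:ℝ) - 1| |y - x| := abs_min_sub_min_le_max _ _ _ _
      _ ≤ |y - x| := by simp
  -- joint continuity of the (retracted) flow
  have hjoint : Continuous fun p : ℝ × ℝ => Φ p.1 (π p.2) := by
    rw [Metric.continuous_iff]
    rintro ⟨t₀, x₀⟩ ε hε
    set C : ℝ := Real.exp (K * (|t₀| + 1)) with hC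
    have hCpos : 0 < C := Real.exp_pos _
    refine ⟨min 1 (ε / (C + M + 1)), by positivity, ?_⟩
    rintro ⟨t, x⟩ hdist
    rw [Prod.dist_eq, max_lt_iff] at hdist
    obtain ⟨hdt, hdx⟩ := hdist
    rw [Real.dist_eq] at hdt hdx ⊢
    have hδε : min 1 (ε / (C + M + 1)) ≤ ε / (C + M + 1) := min_le_right _ _
    have hKt : Real.exp (K * |t|) ≤ C := by
      apply Real.exp_le_exp.mpr
      have h1 : |t| ≤ |t₀| + 1 := by
        have := abs_sub_abs_le_abs_sub t t₀
        have h2 : |t - t₀| < 1 := lt_of_lt_of_le hdt (min_le_left _ _)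
        linarith
      nlinarith
    have e1 : |Φ t (π x) - Φ t (π x₀)| ≤ C * |x - x₀| := by
      calc |Φ t (π x) - Φ t (π x₀)| ≤ Real.exp (K * |t|) * |π x - π x₀| :=
            hgron t (π x₀) (hπmem _) (π x) (hπmem _)
        _ ≤ C * |x - x₀| := by
            have := hπlip x₀ x
            nlinarith [abs_nonneg (π x - π x₀), abs_nonneg (x - x₀), Real.exp_pos (K * |t|)]
    have e2 : |Φ t (π x₀) - Φ t₀ (π x₀)| ≤ M * |t - t₀| := htime _ (hπmem _) t t₀
    have hd1 : |x - x₀| ≤ ε / (C + M + 1) := le_of_lt (lt_of_lt_of_le hdx hδε)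
    have hd2 : |t - t₀| ≤ ε / (C + M + 1) := le_of_lt (lt_of_lt_of_le hdt hδε)
    have hfin : (C + M) * (ε / (C + M + 1)) < ε := by
      rw [div_eq_inv_mul]
      have : 0 < C + M + 1 := by linarith
      rw [show (C + M) * ((C + M + 1)⁻¹ * ε) = ((C + M) / (C + M + 1)) * ε by ring]
      have hlt : (C + M) / (C + M + 1) < 1 := by
        rw [div_lt_one this]; linarith
      nlinarith
    calc |Φ t (π x) - Φ t₀ (π x₀)| ≤
        |Φ t (π x) - Φ t (π x₀)| + |Φ t (π x₀) - Φ t₀ (π x₀)| := abs_sub_le _ _ _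
      _ ≤ C * |x - x₀| + M * |t - t₀| := add_le_add e1 e2
      _ ≤ (C + M) * (ε / (C + M + 1)) := by nlinarith
      _ < ε := hfin
  -- the candidate derivative
  have hΦπmem : ∀ s x : ℝ, Φ s (π x) ∈ Icc (0:ℝ) 1 := fun s x => hmaps s (hπmem x)
  have hX'joint : Continuous fun p : ℝ × ℝ => X' (Φ p.2 (π p.1)) :=
    hX'cont.comp_continuous (hjoint.comp (continuous_snd.prodMk continuous_fst))
      (fun p => hΦπmem _ _)
  have hLcont : Continuous fun p : ℝ × ℝ => ∫ s in (0:ℝ)..p.2, X' (Φ s (π p.1)) := by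
    exact intervalIntegral.continuous_parametric_primitive_of_continuous
      (f := fun x s => X' (Φ s (π x))) (μ := volume) (a₀ := 0) hX'joint
  set D : ℝ → ℝ → ℝ := fun t x => Real.exp (∫ s in (0:ℝ)..t, X' (Φ s (π x))) with hDdef
  have hDcont : ∀ t : ℝ, Continuous (D t) := by
    intro t
    have h0 : Continuous fun x : ℝ => ((x, t) : ℝ × ℝ) := continuous_id.prodMk continuous_const
    have h1 := hLcont.comp h0
    simp only [Function.comp_def] at h1
    exact Real.continuous_exp.comp h1
  have hDpos : ∀ t x : ℝ, 0 < D t x := fun t x => Real.exp_pos _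
  have hDjoint : Continuous fun p : ℝ × ℝ => D p.1 p.2 := by
    have h0 : Continuous fun p : ℝ × ℝ => ((p.2, p.1) : ℝ × ℝ) :=
      continuous_snd.prodMk continuous_fst
    have h1 := hLcont.comp h0
    simp only [Function.comp_def] at h1
    exact Real.continuous_exp.comp h1
  -- image of subintervals
  have himg : ∀ s : ℝ, ∀ x ∈ Icc (0:ℝ) 1, Φ s '' Icc 0 x = Icc 0 (Φ s x) := by
    intro s x hx
    apply Subset.antisymm
    · rintro - ⟨u, hu, rfl⟩
      have huI : u ∈ Icc (0:ℝ) 1 := ⟨hu.1, hu.2.trans hx.2⟩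
      constructor
      · rw [← hfix0 s]; exact hmono s h0I huI hu.1
      · exact hmono s huI hx hu.2
    · intro v hv
      have hvI : v ∈ Icc (0:ℝ) 1 := ⟨hv.1, hv.2.trans (hmaps s hx).2⟩
      refine ⟨Φ (-s) v, ⟨?_, ?_⟩, hinv' s v⟩
      · rw [← hfix0 (-s)]; exact hmono (-s) h0I hvI hv.1
      · have := hmono (-s) hvI (hmaps s hx) hv.2
        rwa [hinv s x] at this
  -- trajectories are continuous in time
  have htraj : ∀ x ∈ Icc (0:ℝ) 1, Continuous fun s : ℝ => Φ s x := by
    intro x hx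
    exact continuous_iff_continuousAt.mpr fun s => (hΦode x hx s).continuousAt
  have hX'traj : ∀ x ∈ Icc (0:ℝ) 1, Continuous fun s : ℝ => X' (Φ s x) := by
    intro x hx
    exact hX'cont.comp_continuous (htraj x hx) (fun s => hmaps s hx)
  -- uIcc of points of I is inside I
  have huIcc : ∀ a ∈ Icc (0:ℝ) 1, ∀ b ∈ Icc (0:ℝ) 1, uIcc a b ⊆ Icc (0:ℝ) 1 := by
    intro a ha b hb
    rw [uIcc]
    exact Icc_subset_Icc (le_inf ha.1 hb.1) (sup_le ha.2 hb.2)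
  -- FTC for X on subintervals
  have hXFTC : ∀ a ∈ Icc (0:ℝ) 1, ∀ b ∈ Icc (0:ℝ) 1, ∫ u in a..b, X' u = X b - X a := by
    have key : ∀ a b : ℝ, a ∈ Icc (0:ℝ) 1 → b ∈ Icc (0:ℝ) 1 → a ≤ b →
        ∫ u in a..b, X' u = X b - X a := by
      intro a b ha hb hab
      apply intervalIntegral.integral_eq_sub_of_hasDeriv_right_of_le hab
      · exact hXcont.mono (Icc_subset_Icc ha.1 hb.2)
      · intro u hu
        have h1 : (0:ℝ) < u := lt_of_le_of_lt ha.1 hu.1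
        have h2 : u < 1 := lt_of_lt_of_le hu.2 hb.2
        have huI : Icc (0:ℝ) 1 ∈ 𝓝 u := Icc_mem_nhds h1 h2
        exact ((hXderiv u ⟨h1.le, h2.le⟩).hasDerivAt huI).hasDerivWithinAt
      · exact (hX'cont.mono (huIcc a ha b hb)).intervalIntegrable
    intro a ha b hb
    rcases le_total a b with hab | hab
    · exact key a b ha hb hab
    · rw [intervalIntegral.integral_symm, key b a hb ha hab]; ring
  -- uniform continuity of X'
  have hX'unif : ∀ ε : ℝ, 0 < ε → ∃ δ : ℝ, 0 < δ ∧ ∀ u ∈ Icc (0:ℝ) 1, ∀ v ∈ Icc (0:ℝ) 1,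
      |u - v| < δ → |X' u - X' v| ≤ ε := by
    intro ε hε
    have huc := isCompact_Icc.uniformContinuousOn_of_continuous hX'cont
    rw [Metric.uniformContinuousOn_iff] at huc
    obtain ⟨δ, hδ, hd⟩ := huc ε hε
    exact ⟨δ, hδ, fun u hu v hv huv =>
      le_of_lt (by simpa [Real.dist_eq] using hd u hu v hv (by rwa [Real.dist_eq]))⟩
  -- separation of trajectories
  have hne : ∀ x ∈ Icc (0:ℝ) 1, ∀ y ∈ Icc (0:ℝ) 1, y ≠ x → ∀ s : ℝ, Φ s y - Φ s x ≠ 0 := by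
    intro x _ y _ hyx s hzero
    apply hyx
    have h1 : Φ s y = Φ s x := by linarith [sub_eq_zero.mp hzero]
    have h2 := congrArg (Φ (-s)) h1
    rwa [hinv, hinv] at h2
  -- value of D inside I
  have hDx : ∀ t : ℝ, ∀ x ∈ Icc (0:ℝ) 1, D t x = Real.exp (∫ s in (0:ℝ)..t, X' (Φ s x)) := by
    intro t x hx
    rw [hDdef]
    simp only [hπid x hx]
  -- THE derivative statement
  have hD : ∀ t : ℝ, ∀ x ∈ Icc (0:ℝ) 1, HasDerivWithinAt (Φ t) (D t x) (Icc (0:ℝ) 1) x := by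
    intro t x hx
    rw [hasDerivWithinAt_iff_tendsto_slope]
    set q : ℝ → ℝ → ℝ := fun y s => (X (Φ s y) - X (Φ s x)) / (Φ s y - Φ s x) with hq
    have hqcont : ∀ y ∈ Icc (0:ℝ) 1, y ≠ x → Continuous (q y) := by
      intro y hyI hyx
      apply Continuous.div
      · exact (hXcont.comp_continuous (htraj y hyI) (fun s => hmaps s hyI)).sub
          (hXcont.comp_continuous (htraj x hx) (fun s => hmaps s hx))
      · exact (htraj y hyI).sub (htraj x hx)
      · exact hne x hx y hyI hyx
    have key : ∀ y, y ∈ Icc (0:ℝ) 1 → y ≠ x →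
        slope (Φ t) x y = Real.exp (∫ s in (0:ℝ)..t, q y s) := by
      intro y hyI hyx
      have hr0 := hne x hx y hyI hyx
      have hrd : ∀ s : ℝ, HasDerivAt (fun s => Φ s y - Φ s x) (X (Φ s y) - X (Φ s x)) s :=
        fun s => (hΦode y hyI s).sub (hΦode x hx s)
      have hrc : Continuous fun s => Φ s y - Φ s x := (htraj y hyI).sub (htraj x hx)
      have hlogd : ∀ s : ℝ, HasDerivAt (fun s => Real.log (Φ s y - Φ s x)) (q y s) s := by
        intro s
        exact (hrd s).log (hr0 s)
      have hFTClog : ∫ s in (0:ℝ)..t, q y s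
          = Real.log (Φ t y - Φ t x) - Real.log (y - x) := by
        rw [intervalIntegral.integral_eq_sub_of_hasDerivAt (fun s _ => hlogd s)
          ((hqcont y hyI hyx).intervalIntegrable 0 t), hΦzero, hΦzero]
      have hrsign : 0 < (Φ t y - Φ t x) * (y - x) := by
        rcases lt_or_ge 0 ((Φ t y - Φ t x) * (y - x)) with hpos | hnp
        · exact hpos
        · exfalso
          have h0mem : (0:ℝ) ∈ uIcc (Φ 0 y - Φ 0 x) (Φ t y - Φ t x) := by
            rw [hΦzero, hΦzero, Set.mem_uIcc]
            rcases mul_nonpos_iff.mp hnp with ⟨h1, h2⟩ | ⟨h1, h2⟩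
            · exact Or.inl ⟨h2, h1⟩
            · exact Or.inr ⟨h1, h2⟩
          obtain ⟨s, _, hs⟩ := intermediate_value_uIcc (hrc.continuousOn) h0mem
          exact hr0 s hs
      have hyx0 : y - x ≠ 0 := sub_ne_zero.mpr hyx
      have hquot : 0 < (Φ t y - Φ t x) / (y - x) := by
        rcases mul_pos_iff.mp hrsign with ⟨h1, h2⟩ | ⟨h1, h2⟩
        · exact div_pos h1 h2
        · exact div_pos_of_neg_of_neg h1 h2
      rw [slope_def_field, hFTClog, Real.exp_sub, Real.exp_log_eq_abs (hr0 t),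
        Real.exp_log_eq_abs hyx0, ← abs_div, abs_of_pos hquot]
    -- convergence of the q-integrals
    have hTq : Tendsto (fun y => ∫ s in (0:ℝ)..t, q y s) (𝓝[Icc (0:ℝ) 1 \ {x}] x)
        (𝓝 (∫ s in (0:ℝ)..t, X' (Φ s x))) := by
      rw [Metric.tendsto_nhdsWithin_nhds]
      intro ε hε
      have hε'pos : 0 < ε / (|t| + 1) := by positivity
      obtain ⟨δ', hδ'pos, hδ'⟩ := hX'unif (ε / (|t| + 1)) hε'pos
      refine ⟨δ' / Real.exp (K * |t|), by positivity, ?_⟩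
      intro y hy hdy
      obtain ⟨hyI, hyx'⟩ := hy
      have hyx : y ≠ x := hyx'
      rw [Real.dist_eq] at hdy ⊢
      have hsb : ∀ s ∈ Set.uIoc (0:ℝ) t, |q y s - X' (Φ s x)| ≤ ε / (|t| + 1) := by
        intro s hs
        have hst : |s| ≤ |t| := by
          rcases Set.mem_uIoc.mp hs with ⟨h1, h2⟩ | ⟨h1, h2⟩
          · rw [abs_of_pos h1]; exact le_trans h2 (le_abs_self t)
          · rw [abs_of_nonpos (le_trans h2 (le_of_eq rfl))]
            calc -s ≤ -t := by linarith
              _ ≤ |t| := neg_le_abs t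
        have hΦclose : |Φ s y - Φ s x| < δ' := by
          have e1 : |Φ s y - Φ s x| ≤ Real.exp (K * |s|) * |y - x| := hgron s x hx y hyI
          have e2 : Real.exp (K * |s|) ≤ Real.exp (K * |t|) :=
            Real.exp_le_exp.mpr (mul_le_mul_of_nonneg_left hst hK0)
          have e3 : Real.exp (K * |t|) * |y - x| < δ' := by
            rw [mul_comm]
            exact (lt_div_iff₀ (Real.exp_pos _)).mp hdy
          nlinarith [abs_nonneg (y - x), Real.exp_pos (K * |s|)]
        have hrne := hne x hx y hyI hyx s
        have hyIs := hmaps s hyI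
        have hxIs := hmaps s hx
        have hint1 : IntervalIntegrable X' volume (Φ s x) (Φ s y) :=
          (hX'cont.mono (huIcc _ hxIs _ hyIs)).intervalIntegrable
        have hint2 : IntervalIntegrable (fun _ : ℝ => X' (Φ s x)) volume (Φ s x) (Φ s y) :=
          intervalIntegrable_const
        have hintsub : ∫ u in (Φ s x)..(Φ s y), (X' u - X' (Φ s x))
            = (X (Φ s y) - X (Φ s x)) - X' (Φ s x) * (Φ s y - Φ s x) := by
          rw [intervalIntegral.integral_sub hint1 hint2, hXFTC _ hxIs _ hyIs,
            intervalIntegral.integral_const, smul_eq_mul]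
          ring
        have hub : |∫ u in (Φ s x)..(Φ s y), (X' u - X' (Φ s x))|
            ≤ (ε / (|t| + 1)) * |Φ s y - Φ s x| := by
          have := intervalIntegral.norm_integral_le_of_norm_le_const
            (C := ε / (|t| + 1)) (f := fun u => X' u - X' (Φ s x))
            (a := Φ s x) (b := Φ s y) ?_
          · simpa [Real.norm_eq_abs, abs_sub_comm (Φ s y) (Φ s x)] using this
          · intro u hu
            have huI : u ∈ Icc (0:ℝ) 1 := huIcc _ hxIs _ hyIs (Set.uIoc_subset_uIcc hu)
            have hud : |u - Φ s x| < δ' := by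
              have hb : |u - Φ s x| ≤ |Φ s y - Φ s x| := by
                rcases Set.mem_uIoc.mp hu with ⟨h1, h2⟩ | ⟨h1, h2⟩
                · rw [abs_of_pos (by linarith), abs_of_nonneg (by linarith)]; linarith
                · rw [abs_of_nonpos (by linarith), abs_of_nonpos (by linarith)]; linarith
              linarith
            rw [Real.norm_eq_abs]
            exact hδ' u huI (Φ s x) hxIs hud
        have hqrw : q y s - X' (Φ s x)
            = ((X (Φ s y) - X (Φ s x)) - X' (Φ s x) * (Φ s y - Φ s x)) / (Φ s y - Φ s x) := by
          rw [hq]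
          field_simp
        rw [hqrw, ← hintsub, abs_div, div_le_iff₀ (abs_pos.mpr hrne)]
        exact hub
      have hqint : IntervalIntegrable (q y) volume 0 t :=
        (hqcont y hyI hyx).intervalIntegrable 0 t
      have hXint : IntervalIntegrable (fun s => X' (Φ s x)) volume 0 t :=
        (hX'traj x hx).intervalIntegrable 0 t
      have hdiff : (∫ s in (0:ℝ)..t, q y s) - ∫ s in (0:ℝ)..t, X' (Φ s x)
          = ∫ s in (0:ℝ)..t, (q y s - X' (Φ s x)) :=
        (intervalIntegral.integral_sub hqint hXint).symm
      calc |(∫ s in (0:ℝ)..t, q y s) - ∫ s in (0:ℝ)..t, X' (Φ s x)|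
          = |∫ s in (0:ℝ)..t, (q y s - X' (Φ s x))| := by rw [hdiff]
        _ ≤ (ε / (|t| + 1)) * |t - 0| := by
            have := intervalIntegral.norm_integral_le_of_norm_le_const
              (C := ε / (|t| + 1)) (f := fun s => q y s - X' (Φ s x)) (a := 0) (b := t)
              (fun s hs => by rw [Real.norm_eq_abs]; exact hsb s hs)
            simpa [Real.norm_eq_abs] using this
        _ < ε := by
            rw [sub_zero]
            have h1 : (ε / (|t| + 1)) * (|t| + 1) = ε := by
              field_simp
            nlinarith [hε'pos]
    have heq : (fun y => slope (Φ t) x y)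
        =ᶠ[𝓝[Icc (0:ℝ) 1 \ {x}] x] fun y => Real.exp (∫ s in (0:ℝ)..t, q y s) :=
      eventually_mem_nhdsWithin.mono (fun y hy => key y hy.1 hy.2)
    have hTexp : Tendsto (fun y => Real.exp (∫ s in (0:ℝ)..t, q y s))
        (𝓝[Icc (0:ℝ) 1 \ {x}] x) (𝓝 (D t x)) := by
      rw [hDx t x hx]
      exact (Real.continuous_exp.continuousAt.tendsto).comp hTq
    exact Filter.Tendsto.congr' heq.symm hTexp
  -- Borel representative of h
  have hhae : AEStronglyMeasurable h (volume.restrict (Icc (0:ℝ) 1)) := hhInt.aestronglyMeasurable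
  set g : ℝ → ℝ := hhae.mk h with hgdef
  have hgsm : StronglyMeasurable g := hhae.stronglyMeasurable_mk
  have hhg : h =ᵐ[volume.restrict (Icc (0:ℝ) 1)] g := hhae.ae_eq_mk
  have hgInt : IntegrableOn g (Icc (0:ℝ) 1) := hhInt.congr hhg
  have habs_eq : ∫ x in Icc (0:ℝ) 1, |h x| = ∫ x in Icc (0:ℝ) 1, |g x| :=
    integral_congr_ae (hhg.mono fun x hx => by simp only [hx])
  have hint_eq : ∀ a ∈ Icc (0:ℝ) 1, ∀ b ∈ Icc (0:ℝ) 1,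
      (∫ u in a..b, h u) = ∫ u in a..b, g u := by
    intro a ha b hb
    apply intervalIntegral.integral_congr_ae
    have h1 := (ae_restrict_iff' measurableSet_Icc).mp hhg
    filter_upwards [h1] with u hu hu2
    exact hu (huIcc a ha b hb (Set.uIoc_subset_uIcc hu2))
  -- joint measurability of the density integrand
  have hFmsm : StronglyMeasurable fun p : ℝ × ℝ => g (Φ p.1 (π p.2)) * D p.1 p.2 := by
    apply StronglyMeasurable.mul
    · exact (hgsm.measurable.comp hjoint.measurable).stronglyMeasurable
    · exact hDjoint.stronglyMeasurable
  -- change of variables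
  have hCoV : ∀ s : ℝ, ∀ x ∈ Icc (0:ℝ) 1, ∀ G : ℝ → ℝ,
      ∫ u in Icc 0 (Φ s x), G u = ∫ u in Icc (0:ℝ) x, D s u * G (Φ s u) := by
    intro s x hx G
    have hsub : Icc (0:ℝ) x ⊆ Icc (0:ℝ) 1 := Icc_subset_Icc le_rfl hx.2
    have himg' : Φ s '' Icc 0 x = Icc 0 (Φ s x) := himg s x hx
    have h1 := integral_image_eq_integral_abs_deriv_smul (f := Φ s) (f' := D s)
      measurableSet_Icc (fun u hu => (hD s u (hsub hu)).mono hsub) ((hinj s).mono hsub) G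
    rw [himg'] at h1
    rw [h1]
    apply setIntegral_congr_fun measurableSet_Icc
    intro u _
    show |D s u| • G (Φ s u) = D s u * G (Φ s u)
    rw [smul_eq_mul, abs_of_pos (hDpos s u)]
  -- integrability of the integrand in the space variable
  have hsliceInt : ∀ s : ℝ, IntegrableOn (fun u => g (Φ s (π u)) * D s u) (Icc (0:ℝ) 1) := by
    intro s
    have h1 := (integrableOn_image_iff_integrableOn_abs_deriv_smul
      measurableSet_Icc (hD s) (hinj s) g).mp (by rw [(hbij s).image_eq]; exact hgInt)
    apply h1.congr_fun ?_ measurableSet_Icc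
    intro u hu
    show |D s u| • g (Φ s u) = g (Φ s (π u)) * D s u
    rw [smul_eq_mul, abs_of_pos (hDpos s u), hπid u hu]
    ring
  -- norm of the integrand on I
  have hFnorm : ∀ s : ℝ, EqOn (fun u => ‖g (Φ s (π u)) * D s u‖)
      (fun u => D s u * |g (Φ s u)|) (Icc (0:ℝ) 1) := by
    intro s u hu
    simp only [Real.norm_eq_abs, abs_mul, abs_of_pos (hDpos s u), hπid u hu, mul_comm]
  -- integral of the norm over the space variable is constant in s
  have hconst : ∀ s : ℝ, (∫ u in Icc (0:ℝ) 1, ‖g (Φ s (π u)) * D s u‖)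
      = ∫ v in Icc (0:ℝ) 1, |g v| := by
    intro s
    rw [setIntegral_congr_fun measurableSet_Icc (hFnorm s)]
    have h1 := hCoV s 1 h1I (fun v => |g v|)
    rw [hfix1 s] at h1
    exact h1.symm
  -- product integrability
  have hprodInt : ∀ a b : ℝ, Integrable (fun p : ℝ × ℝ => g (Φ p.1 (π p.2)) * D p.1 p.2)
      ((volume.restrict (Set.uIoc a b)).prod (volume.restrict (Icc (0:ℝ) 1))) := by
    intro a b
    rw [integrable_prod_iff (hFmsm.aestronglyMeasurable)]
    constructor
    · exact ae_of_all _ fun s => hsliceInt s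
    · haveI : IsFiniteMeasure (volume.restrict (Set.uIoc a b)) := by
        constructor
        rw [Measure.restrict_apply_univ]
        have : Set.uIoc a b = Ioc (a ⊓ b) (a ⊔ b) := rfl
        rw [this, Real.volume_Ioc]
        exact ENNReal.ofReal_lt_top
      apply Integrable.congr (integrable_const (∫ v in Icc (0:ℝ) 1, |g v|))
      exact ae_of_all _ fun s => (hconst s).symm
  -- Fubini
  have hswap : ∀ a b : ℝ, ∀ A : Set ℝ, MeasurableSet A → A ⊆ Icc (0:ℝ) 1 →
      (∫ u in A, (∫ s in Set.uIoc a b, g (Φ s (π u)) * D s u))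
      = ∫ s in Set.uIoc a b, (∫ u in A, g (Φ s (π u)) * D s u) := by
    intro a b A hA hAsub
    have h1 : Integrable (fun p : ℝ × ℝ => g (Φ p.1 (π p.2)) * D p.1 p.2)
        ((volume.restrict (Set.uIoc a b)).prod (volume.restrict A)) := by
      have h2 := hprodInt a b
      rw [Measure.prod_restrict] at h2 ⊢
      have h3 := h2.restrict (s := Set.uIoc a b ×ˢ A)
      rwa [Measure.restrict_restrict (measurableSet_uIoc.prod hA),
        Set.prod_inter_prod, Set.inter_self, Set.inter_eq_left.mpr hAsub] at h3
    exact (integral_integral_swap (f := fun s u => g (Φ s (π u)) * D s u) h1).symm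
  -- the density of log DΦᵗ
  set dl : ℝ → ℝ → ℝ := fun t u => ∫ s in (0:ℝ)..t, g (Φ s (π u)) * D s u with hdldef
  have hdlsm : ∀ t : ℝ, StronglyMeasurable (dl t) := by
    intro t
    have h2 : StronglyMeasurable fun u => ∫ s in Set.uIoc 0 t, g (Φ s (π u)) * D s u :=
      hFmsm.integral_prod_left' (μ := volume.restrict (Set.uIoc 0 t))
    have h3 : dl t = fun u => ((if (0:ℝ) ≤ t then (1:ℝ) else -1) : ℝ) *
        ∫ s in Set.uIoc 0 t, g (Φ s (π u)) * D s u := by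
      funext u
      rw [hdldef]
      simp only
      rw [intervalIntegral.intervalIntegral_eq_integral_uIoc _ _ _ volume, smul_eq_mul]
    rw [h3]
    exact stronglyMeasurable_const.mul h2
  have hBint : ∀ a b : ℝ, IntegrableOn
      (fun u => ∫ s in Set.uIoc a b, ‖g (Φ s (π u)) * D s u‖) (Icc (0:ℝ) 1) :=
    fun a b => (hprodInt a b).integral_norm_prod_right
  have hdl_bound : ∀ t u : ℝ, |dl t u| ≤ ∫ s in Set.uIoc 0 t, ‖g (Φ s (π u)) * D s u‖ := by
    intro t u
    simpa [Real.norm_eq_abs] using intervalIntegral.norm_integral_le_integral_norm_uIoc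
      (f := fun s => g (Φ s (π u)) * D s u) (a := (0:ℝ)) (b := t) (μ := volume)
  have hdlInt : ∀ t : ℝ, IntegrableOn (dl t) (Icc (0:ℝ) 1) := by
    intro t
    apply Integrable.mono' (hBint 0 t) (hdlsm t).aestronglyMeasurable
    exact ae_of_all _ fun u => by rw [Real.norm_eq_abs]; exact hdl_bound t u
  -- total mass computation
  have hBval : ∀ a b : ℝ, (∫ u in Icc (0:ℝ) 1, (∫ s in Set.uIoc a b, ‖g (Φ s (π u)) * D s u‖))
      = |b - a| * ∫ v in Icc (0:ℝ) 1, |g v| := by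
    intro a b
    have h1 : Integrable (fun p : ℝ × ℝ => ‖g (Φ p.1 (π p.2)) * D p.1 p.2‖)
        ((volume.restrict (Set.uIoc a b)).prod (volume.restrict (Icc (0:ℝ) 1))) :=
      (hprodInt a b).norm
    have h2 := integral_integral_swap (f := fun s u => ‖g (Φ s (π u)) * D s u‖) h1
    rw [← h2, setIntegral_congr_fun measurableSet_uIoc (fun s _ => hconst s), setIntegral_const,
      smul_eq_mul]
    congr 1
    have h3 : Set.uIoc a b = Ioc (a ⊓ b) (a ⊔ b) := rfl
    rw [h3, Real.volume_real_Ioc_of_le inf_le_sup,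
      max_sub_min_eq_abs, abs_sub_comm]
  -- the key primitive identity
  have hIcc0x : ∀ x ∈ Icc (0:ℝ) 1, Icc (0:ℝ) x ⊆ Icc (0:ℝ) 1 :=
    fun x hx => Icc_subset_Icc le_rfl hx.2
  have hinner : ∀ s : ℝ, ∀ x ∈ Icc (0:ℝ) 1,
      (∫ u in Icc (0:ℝ) x, g (Φ s (π u)) * D s u) = X' (Φ s x) - X' 0 := by
    intro s x hx
    have e1 : (∫ u in Icc (0:ℝ) x, g (Φ s (π u)) * D s u)
        = ∫ u in Icc (0:ℝ) x, D s u * g (Φ s u) := by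
      apply setIntegral_congr_fun measurableSet_Icc
      intro u hu
      show g (Φ s (π u)) * D s u = D s u * g (Φ s u)
      rw [hπid u (hIcc0x x hx hu)]
      ring
    rw [e1, ← hCoV s x hx g]
    have hΦsx := hmaps s hx
    have e2 : (∫ u in Icc 0 (Φ s x), g u) = ∫ u in (0:ℝ)..(Φ s x), g u := by
      rw [intervalIntegral.integral_of_le hΦsx.1, integral_Icc_eq_integral_Ioc]
    rw [e2, ← hint_eq 0 h0I (Φ s x) hΦsx]
    have h4 := hprim (Φ s x) hΦsx
    linarith
  have hkey : ∀ t : ℝ, ∀ x ∈ Icc (0:ℝ) 1,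
      (∫ u in (0:ℝ)..x, dl t u) = (∫ s in (0:ℝ)..t, X' (Φ s x)) - ∫ s in (0:ℝ)..t, X' 0 := by
    intro t x hx
    have e2 : ∀ u : ℝ, dl t u = ((if (0:ℝ) ≤ t then (1:ℝ) else -1) : ℝ) •
        ∫ s in Set.uIoc 0 t, g (Φ s (π u)) * D s u :=
      fun u => intervalIntegral.intervalIntegral_eq_integral_uIoc _ _ _ volume
    calc (∫ u in (0:ℝ)..x, dl t u) = ∫ u in Icc (0:ℝ) x, dl t u := by
          rw [intervalIntegral.integral_of_le hx.1, integral_Icc_eq_integral_Ioc]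
      _ = ((if (0:ℝ) ≤ t then (1:ℝ) else -1) : ℝ) •
          ∫ u in Icc (0:ℝ) x, (∫ s in Set.uIoc 0 t, g (Φ s (π u)) * D s u) := by
          rw [setIntegral_congr_fun measurableSet_Icc (fun u _ => e2 u), integral_smul]
      _ = ((if (0:ℝ) ≤ t then (1:ℝ) else -1) : ℝ) •
          ∫ s in Set.uIoc 0 t, (∫ u in Icc (0:ℝ) x, g (Φ s (π u)) * D s u) := by
          rw [hswap 0 t (Icc 0 x) measurableSet_Icc (hIcc0x x hx)]
      _ = ((if (0:ℝ) ≤ t then (1:ℝ) else -1) : ℝ) •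
          ∫ s in Set.uIoc 0 t, (X' (Φ s x) - X' 0) := by
          rw [setIntegral_congr_fun measurableSet_uIoc (fun s _ => hinner s x hx)]
      _ = ∫ s in (0:ℝ)..t, (X' (Φ s x) - X' 0) :=
          (intervalIntegral.intervalIntegral_eq_integral_uIoc _ _ _ volume).symm
      _ = (∫ s in (0:ℝ)..t, X' (Φ s x)) - ∫ s in (0:ℝ)..t, X' 0 :=
          intervalIntegral.integral_sub ((hX'traj x hx).intervalIntegrable 0 t)
            intervalIntegrable_const
  have hlogD : ∀ t : ℝ, ∀ x ∈ Icc (0:ℝ) 1,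
      Real.log (D t x) = Real.log (D t 0) + ∫ u in (0:ℝ)..x, dl t u := by
    intro t x hx
    rw [hkey t x hx, hDx t x hx, hDx t 0 h0I, Real.log_exp, Real.log_exp]
    have e0 : (∫ s in (0:ℝ)..t, X' (Φ s 0)) = ∫ s in (0:ℝ)..t, X' 0 :=
      intervalIntegral.integral_congr (fun s _ => by rw [hfix0 s])
    rw [e0]
    ring
  -- the variation bound
  have hvar : ∀ t : ℝ, (∫ u in Icc (0:ℝ) 1, |dl t u|) ≤ |t| * ∫ x in Icc (0:ℝ) 1, |h x| := by
    intro t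
    rw [habs_eq]
    have h1 : (∫ u in Icc (0:ℝ) 1, |dl t u|)
        ≤ ∫ u in Icc (0:ℝ) 1, (∫ s in Set.uIoc 0 t, ‖g (Φ s (π u)) * D s u‖) :=
      integral_mono (hdlInt t).abs (hBint 0 t) (fun u => hdl_bound t u)
    calc (∫ u in Icc (0:ℝ) 1, |dl t u|)
        ≤ ∫ u in Icc (0:ℝ) 1, (∫ s in Set.uIoc 0 t, ‖g (Φ s (π u)) * D s u‖) := h1
      _ = |t - 0| * ∫ v in Icc (0:ℝ) 1, |g v| := hBval 0 t
      _ = |t| * ∫ v in Icc (0:ℝ) 1, |g v| := by rw [sub_zero]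
  -- L¹-continuity of the density in t
  have hdiffb : ∀ t₀ t : ℝ, (∫ u in Icc (0:ℝ) 1, |dl t u - dl t₀ u|)
      ≤ |t - t₀| * ∫ x in Icc (0:ℝ) 1, |h x| := by
    intro t₀ t
    rw [habs_eq]
    set R : ℝ := |t| + |t₀| + 1 with hR
    have hRpos : -R < -(|t| + |t₀|) := by
      rw [hR]; linarith [abs_nonneg t, abs_nonneg t₀]
    have hae : ∀ᵐ u ∂(volume.restrict (Icc (0:ℝ) 1)),
        IntegrableOn (fun s => g (Φ s (π u)) * D s u) (Set.uIoc (-R) R) := by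
      have h2 := (hprodInt (-R) R).swap
      have h3 := ((integrable_prod_iff
        ((hFmsm.comp_measurable measurable_swap).aestronglyMeasurable)).mp h2).1
      filter_upwards [h3] with u hu
      exact hu
    have haeq : ∀ᵐ u ∂(volume.restrict (Icc (0:ℝ) 1)),
        |dl t u - dl t₀ u| ≤ ∫ s in Set.uIoc t₀ t, ‖g (Φ s (π u)) * D s u‖ := by
      filter_upwards [hae] with u hu
      have hRR : -R ≤ R := by rw [hR]; linarith [abs_nonneg t, abs_nonneg t₀]
      have hbig : Set.uIoc (-R) R = Ioc (-R) R := Set.uIoc_of_le hRR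
      have hii : ∀ a b : ℝ, |a| ≤ |t| + |t₀| → |b| ≤ |t| + |t₀| →
          IntervalIntegrable (fun s => g (Φ s (π u)) * D s u) volume a b := by
        intro a b ha hb
        rw [intervalIntegrable_iff]
        apply hu.mono_set
        rw [hbig]
        intro z hz
        rcases Set.mem_uIoc.mp hz with ⟨h1, h2⟩ | ⟨h1, h2⟩
        · constructor
          · calc -R < -(|t| + |t₀|) := hRpos
              _ ≤ -|a| := by linarith
              _ ≤ a := neg_abs_le a
              _ < z := h1
          · calc z ≤ b := h2
              _ ≤ |b| := le_abs_self b
              _ ≤ R := by rw [hR]; linarith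
        · constructor
          · calc -R < -(|t| + |t₀|) := hRpos
              _ ≤ -|b| := by linarith
              _ ≤ b := neg_abs_le b
              _ < z := h1
          · calc z ≤ a := h2
              _ ≤ |a| := le_abs_self a
              _ ≤ R := by rw [hR]; linarith
      have habs0 : |(0:ℝ)| ≤ |t| + |t₀| := by
        simp [abs_nonneg t, abs_nonneg t₀]
        positivity
      have h3 : dl t u - dl t₀ u = ∫ s in t₀..t, g (Φ s (π u)) * D s u :=
        intervalIntegral.integral_interval_sub_left
          (hii 0 t habs0 (by simp [le_add_of_nonneg_right (abs_nonneg t₀)]))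
          (hii 0 t₀ habs0 (by simp [le_add_of_nonneg_left (abs_nonneg t)]))
      rw [h3]
      simpa [Real.norm_eq_abs] using intervalIntegral.norm_integral_le_integral_norm_uIoc
        (f := fun s => g (Φ s (π u)) * D s u) (a := t₀) (b := t) (μ := volume)
    have h4 : (∫ u in Icc (0:ℝ) 1, |dl t u - dl t₀ u|)
        ≤ ∫ u in Icc (0:ℝ) 1, (∫ s in Set.uIoc t₀ t, ‖g (Φ s (π u)) * D s u‖) :=
      integral_mono_ae ((hdlInt t).sub (hdlInt t₀)).abs (hBint t₀ t) haeq
    calc (∫ u in Icc (0:ℝ) 1, |dl t u - dl t₀ u|)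
        ≤ ∫ u in Icc (0:ℝ) 1, (∫ s in Set.uIoc t₀ t, ‖g (Φ s (π u)) * D s u‖) := h4
      _ = |t - t₀| * ∫ v in Icc (0:ℝ) 1, |g v| := hBval t₀ t
  -- sup-distance bound
  haveI : Nonempty (Icc (0:ℝ) 1) := ⟨⟨0, h0I⟩⟩
  have hsup : ∀ t t₀ : ℝ, supDist01 (Φ t) (Φ t₀) ≤ M * |t - t₀| := by
    intro t t₀
    apply ciSup_le
    rintro ⟨x, hx⟩
    exact htime x hx t t₀
  have hhabs : (0:ℝ) ≤ ∫ x in Icc (0:ℝ) 1, |h x| :=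
    integral_nonneg fun x => abs_nonneg _
  -- assembly
  refine ⟨fun t =>
    { toFun := Φ t
      derivFun := D t
      map_zero := hfix0 t
      map_one := hfix1 t
      fixes_outside := fun x hx => hΦout t x hx
      bijOn := hbij t
      hasDeriv := hD t
      derivFun_cont := (hDcont t).continuousOn
      derivFun_pos := fun x _ => hDpos t x
      dlog := dl t
      dlog_int := hdlInt t
      dlog_prim := hlogD t }, fun t x => rfl, fun t => hvar t, ?_⟩
  intro t₀ ε hε
  set c : ℝ := ∫ x in Icc (0:ℝ) 1, |h x| with hc
  refine ⟨ε / (M + c + 1), by positivity, ?_⟩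
  intro t hd
  have hrfl : dist1ac
      ({ toFun := Φ t, derivFun := D t, map_zero := hfix0 t, map_one := hfix1 t,
         fixes_outside := fun x hx => hΦout t x hx, bijOn := hbij t, hasDeriv := hD t,
         derivFun_cont := (hDcont t).continuousOn, derivFun_pos := fun x _ => hDpos t x,
         dlog := dl t, dlog_int := hdlInt t, dlog_prim := hlogD t } : C1acDiffeo)
      ({ toFun := Φ t₀, derivFun := D t₀, map_zero := hfix0 t₀, map_one := hfix1 t₀,
         fixes_outside := fun x hx => hΦout t₀ x hx, bijOn := hbij t₀, hasDeriv := hD t₀,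
         derivFun_cont := (hDcont t₀).continuousOn, derivFun_pos := fun x _ => hDpos t₀ x,
         dlog := dl t₀, dlog_int := hdlInt t₀, dlog_prim := hlogD t₀ } : C1acDiffeo)
      = supDist01 (Φ t) (Φ t₀) + ∫ x in Icc (0:ℝ) 1, |dl t x - dl t₀ x| := rfl
  rw [hrfl]
  have e1 := hsup t t₀
  have e2 := hdiffb t₀ t
  have hdd : |t - t₀| < ε / (M + c + 1) := hd
  have hδval : (ε / (M + c + 1)) * (M + c + 1) = ε := by
    field_simp
  nlinarith [abs_nonneg (t - t₀), hhabs, hM0]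
end
end

section
/- Let U be a linear isometric action of a finitely generated Abelian group Γ on a Banach space B, and let c : Γ → B be a cocycle, i.e. c(g_1 g_2) = c(g_2) + U(g_2)(c(g_1)) for all g_1, g_2 ∈ Γ. Then there exists a sequence of vectors ψ_n ∈ B such that, for every f ∈ Γ, the coboundary defect ||c(f) − (ψ_n − U(f)(ψ_n))||_B converges to drift_c(f) as n → ∞; in fact, drift_c(f) = inf_{ψ ∈ B} ||c(f) − (ψ − U(f)(ψ))||_B for every f ∈ Γ. -/
open Filter Topology

noncomputable section

namespace DriftAux

variable {Γ : Type*} [CommGroup Γ]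
    {B : Type*} [NormedAddCommGroup B] [NormedSpace ℝ B]
    (U : Γ →* (B ≃ₗᵢ[ℝ] B)) (c : Γ → B)
    (hc : ∀ g₁ g₂ : Γ, c (g₁ * g₂) = c g₂ + U g₂ (c g₁))

section cocycle
include hc

lemma c_one : c 1 = 0 := by
  have h := hc 1 1
  simp only [mul_one, map_one] at h
  have h1 : (1 : B ≃ₗᵢ[ℝ] B) (c 1) = c 1 := rfl
  rw [h1] at h
  exact left_eq_add.mp h

/-- key coboundary bound along powers -/
lemma lower_aux (f : Γ) (ψ : B) (m : ℕ) :
    ‖c (f ^ m) - (ψ - U (f ^ m) ψ)‖ ≤ m * ‖c f - (ψ - U f ψ)‖ := by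
  induction m with
  | zero => simp [c_one U c hc]
  | succ m ih =>
    have key : c (f ^ (m + 1)) - (ψ - U (f ^ (m + 1)) ψ)
        = (c f - (ψ - U f ψ)) + U f (c (f ^ m) - (ψ - U (f ^ m) ψ)) := by
      have e1 : c (f ^ (m + 1)) = c f + U f (c (f ^ m)) := by
        rw [pow_succ, hc (f ^ m) f]
      have e2 : U (f ^ (m + 1)) ψ = U f (U (f ^ m) ψ) := by
        rw [pow_succ, mul_comm, map_mul]
        rfl
      rw [e1, e2, map_sub, map_sub]
      abel
    rw [key]
    calc ‖(c f - (ψ - U f ψ)) + U f (c (f ^ m) - (ψ - U (f ^ m) ψ))‖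
        ≤ ‖c f - (ψ - U f ψ)‖ + ‖U f (c (f ^ m) - (ψ - U (f ^ m) ψ))‖ := norm_add_le _ _
      _ = ‖c f - (ψ - U f ψ)‖ + ‖c (f ^ m) - (ψ - U (f ^ m) ψ)‖ := by
          rw [(U f).norm_map]
      _ ≤ ‖c f - (ψ - U f ψ)‖ + m * ‖c f - (ψ - U f ψ)‖ := by linarith
      _ = (m + 1 : ℕ) * ‖c f - (ψ - U f ψ)‖ := by push_cast; ring

/-- `m • c f - c (f ^ m)` is a coboundary of `Φ = ∑_{j<m} c (f^j)` -/
lemma phi_identity (f : Γ) (m : ℕ) :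
    (m : ℝ) • c f - c (f ^ m)
      = (∑ j ∈ Finset.range m, c (f ^ j)) - U f (∑ j ∈ Finset.range m, c (f ^ j)) := by
  induction m with
  | zero => simp [c_one U c hc]
  | succ m ih =>
    have e1 : c (f ^ (m + 1)) = c f + U f (c (f ^ m)) := by
      rw [pow_succ, hc (f ^ m) f]
    have hcast : ((m + 1 : ℕ) : ℝ) • c f = (m : ℝ) • c f + c f := by
      push_cast; rw [add_smul, one_smul]
    rw [Finset.sum_range_succ, map_add, e1, hcast, ← sub_eq_zero]
    calc ((m : ℝ) • c f + c f - (c f + U f (c (f ^ m))))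
          - ((∑ j ∈ Finset.range m, c (f ^ j)) + c (f ^ m)
              - (U f (∑ j ∈ Finset.range m, c (f ^ j)) + U f (c (f ^ m))))
        = ((m : ℝ) • c f - c (f ^ m))
            - ((∑ j ∈ Finset.range m, c (f ^ j))
                - U f (∑ j ∈ Finset.range m, c (f ^ j))) := by abel
      _ = 0 := sub_eq_zero_of_eq ih

end cocycle

/-- Sum of the imagesof `w` under the action of a box of side `n` built on the
generators `gen`. -/
def boxSum {ι : Type*} [Fintype ι] [DecidableEq ι] (gen : ι → Γ) (n : ℕ) (w : B) : B :=
  ∑ a : ι → Fin n, U (∏ i, gen i ^ (a i : ℕ)) w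

variable {ι : Type*} [Fintype ι] [DecidableEq ι] (gen : ι → Γ)

lemma boxSum_norm_le (n : ℕ) (w : B) :
    ‖boxSum U gen n w‖ ≤ (n : ℝ) ^ (Fintype.card ι) * ‖w‖ := by
  calc ‖boxSum U gen n w‖ ≤ ∑ a : ι → Fin n, ‖U (∏ i, gen i ^ (a i : ℕ)) w‖ :=
        norm_sum_le _ _
    _ = ∑ _a : ι → Fin n, ‖w‖ := by
        refine Finset.sum_congr rfl fun a _ => (U _).norm_map w
    _ = (n : ℝ) ^ (Fintype.card ι) * ‖w‖ := by
        rw [Finset.sum_const, Finset.card_univ, Fintype.card_fun, Fintype.card_fin,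
          nsmul_eq_mul]
        push_cast
        ring

lemma boxSum_add (n : ℕ) (v w : B) :
    boxSum U gen n (v + w) = boxSum U gen n v + boxSum U gen n w := by
  simp [boxSum, map_add, Finset.sum_add_distrib]

lemma boxSum_sub (n : ℕ) (v w : B) :
    boxSum U gen n (v - w) = boxSum U gen n v - boxSum U gen n w := by
  simp [boxSum, map_sub, Finset.sum_sub_distrib]

lemma boxSum_smul (n : ℕ) (r : ℝ) (w : B) :
    boxSum U gen n (r • w) = r • boxSum U gen n w := by
  simp [boxSum, map_smul, Finset.smul_sum]

lemma boxSum_comm (n : ℕ) (f : Γ) (w : B) :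
    boxSum U gen n (U f w) = U f (boxSum U gen n w) := by
  rw [boxSum, boxSum, map_sum]
  refine Finset.sum_congr rfl fun a _ => ?_
  calc U (∏ i, gen i ^ (a i : ℕ)) (U f w)
      = (U (∏ i, gen i ^ (a i : ℕ)) * U f) w := rfl
    _ = U ((∏ i, gen i ^ (a i : ℕ)) * f) w := by rw [← map_mul]
    _ = U (f * ∏ i, gen i ^ (a i : ℕ)) w := by rw [mul_comm]
    _ = (U f * U (∏ i, gen i ^ (a i : ℕ))) w := by rw [map_mul]
    _ = U f (U (∏ i, gen i ^ (a i : ℕ)) w) := rfl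

/-- Shift of the box average along one generator moves the sum by at most the two faces. -/
lemma shift_gen {ι : Type*} [Fintype ι] [DecidableEq ι] (gen : ι → Γ) (i₀ : ι) (n : ℕ) (w : B) :
    ‖U (gen i₀) (∑ a : ι → Fin n, U (∏ i, gen i ^ (a i : ℕ)) w)
        - ∑ a : ι → Fin n, U (∏ i, gen i ^ (a i : ℕ)) w‖
      ≤ 2 * (n : ℝ) ^ (Fintype.card ι - 1) * ‖w‖ := by
  classical
  set t := gen i₀ with ht
  set r : ({j : ι // j ≠ i₀} → Fin n) → Γ :=
    fun b => ∏ j : {j : ι // j ≠ i₀}, gen j ^ (b j : ℕ) with hr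
  -- evaluate the box element corresponding to a split index
  have split : ∀ (x : Fin n) (b : {j : ι // j ≠ i₀} → Fin n),
      (∏ i, gen i ^ ((((Equiv.funSplitAt i₀ (Fin n)).symm (x, b)) i : ℕ)))
        = t ^ (x : ℕ) * r b := by
    intro x b
    rw [Fintype.prod_eq_mul_prod_compl i₀]
    congr 1
    · simp [Equiv.funSplitAt, Equiv.piSplitAt, ht]
    · rw [Finset.prod_subtype (p := fun j => j ≠ i₀) ({i₀}ᶜ : Finset ι) (by simp) 
        (fun i => gen i ^ ((((Equiv.funSplitAt i₀ (Fin n)).symm (x, b)) i : ℕ)))]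
      refine Finset.prod_congr rfl fun j _ => ?_
      have : ((Equiv.funSplitAt i₀ (Fin n)).symm (x, b)) (j : ι) = b j := by
        simp [Equiv.funSplitAt, Equiv.piSplitAt, j.2]
      rw [this]
  -- rewrite the two sums as double sums over (x, b)
  have resum : ∀ (sh : ℕ),
      (∑ a : ι → Fin n, U (t ^ sh * ∏ i, gen i ^ (a i : ℕ)) w)
        = ∑ b : {j : ι // j ≠ i₀} → Fin n, ∑ x : Fin n, U (t ^ ((x : ℕ) + sh) * r b) w := by
    intro sh
    rw [← Equiv.sum_comp ((Equiv.funSplitAt i₀ (Fin n)).symm)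
      (fun a => U (t ^ sh * ∏ i, gen i ^ (a i : ℕ)) w), Fintype.sum_prod_type]
    rw [Finset.sum_comm]
    refine Finset.sum_congr rfl fun b _ => Finset.sum_congr rfl fun x _ => ?_
    rw [split x b]
    congr 2
    rw [← mul_assoc, ← pow_add]
    ring_nf
  -- express the left difference as a telescoping sum
  have lhs_eq : U t (∑ a : ι → Fin n, U (∏ i, gen i ^ (a i : ℕ)) w)
        - ∑ a : ι → Fin n, U (∏ i, gen i ^ (a i : ℕ)) w
      = ∑ b : {j : ι // j ≠ i₀} → Fin n, (U (t ^ n * r b) w - U (t ^ 0 * r b) w) := by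
    have hUt : U t (∑ a : ι → Fin n, U (∏ i, gen i ^ (a i : ℕ)) w)
        = ∑ a : ι → Fin n, U (t ^ 1 * ∏ i, gen i ^ (a i : ℕ)) w := by
      rw [map_sum]
      refine Finset.sum_congr rfl fun a _ => ?_
      rw [pow_one, map_mul]
      rfl
    have h0 : (∑ a : ι → Fin n, U (∏ i, gen i ^ (a i : ℕ)) w)
        = ∑ a : ι → Fin n, U (t ^ 0 * ∏ i, gen i ^ (a i : ℕ)) w := by
      simp
    rw [hUt, h0, resum 1, resum 0, ← Finset.sum_sub_distrib]
    refine Finset.sum_congr rfl fun b _ => ?_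
    have tele := Finset.sum_range_sub (fun x => U (t ^ x * r b) w) n
    rw [← Fin.sum_univ_eq_sum_range (fun x => U (t ^ (x + 1) * r b) w - U (t ^ x * r b) w) n] at tele
    rw [← tele, Finset.sum_sub_distrib]
    simp
  rw [lhs_eq]
  calc ‖∑ b : {j : ι // j ≠ i₀} → Fin n, (U (t ^ n * r b) w - U (t ^ 0 * r b) w)‖
      ≤ ∑ b : {j : ι // j ≠ i₀} → Fin n, ‖U (t ^ n * r b) w - U (t ^ 0 * r b) w‖ :=
        norm_sum_le _ _
    _ ≤ ∑ _b : {j : ι // j ≠ i₀} → Fin n, 2 * ‖w‖ := by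
        refine Finset.sum_le_sum fun b _ => ?_
        calc ‖U (t ^ n * r b) w - U (t ^ 0 * r b) w‖
            ≤ ‖U (t ^ n * r b) w‖ + ‖U (t ^ 0 * r b) w‖ := norm_sub_le _ _
          _ = 2 * ‖w‖ := by rw [(U _).norm_map, (U _).norm_map]; ring
    _ = 2 * (n : ℝ) ^ (Fintype.card ι - 1) * ‖w‖ := by
        rw [Finset.sum_const, Finset.card_univ]
        have hcard : Fintype.card ({j : ι // j ≠ i₀} → Fin n)
            = n ^ (Fintype.card ι - 1) := by
          rw [Fintype.card_fun, Fintype.card_fin]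
          congr 1
          rw [Fintype.card_subtype_compl, Fintype.card_subtype_eq]
        rw [hcard, nsmul_eq_mul]
        push_cast
        ring

/-- For every `f` in the group generated by `gen`, the box sums are asymptotically
`U f`-invariant. -/
lemma shift_all (hgen : Submonoid.closure (Set.range gen) = ⊤) (f : Γ) :
    ∃ C : ℝ, 0 ≤ C ∧ ∀ (n : ℕ) (w : B),
      ‖U f (boxSum U gen n w) - boxSum U gen n w‖ * n
        ≤ C * (n : ℝ) ^ (Fintype.card ι) * ‖w‖ := by
  have hf : f ∈ Submonoid.closure (Set.range gen) := by rw [hgen]; trivial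
  induction hf using Submonoid.closure_induction with
  | mem x hx =>
    obtain ⟨i₀, rfl⟩ := hx
    refine ⟨2, by norm_num, fun n w => ?_⟩
    have h := shift_gen U gen i₀ n w
    have hk : Fintype.card ι - 1 + 1 = Fintype.card ι :=
      Nat.succ_pred_eq_of_pos (Fintype.card_pos_iff.mpr ⟨i₀⟩)
    calc ‖U (gen i₀) (boxSum U gen n w) - boxSum U gen n w‖ * n
        ≤ (2 * (n : ℝ) ^ (Fintype.card ι - 1) * ‖w‖) * n := by
          refine mul_le_mul_of_nonneg_right ?_ (by positivity)
          exact h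
      _ = 2 * ((n : ℝ) ^ (Fintype.card ι - 1) * (n:ℝ)^1) * ‖w‖ := by ring
      _ = 2 * (n : ℝ) ^ (Fintype.card ι) * ‖w‖ := by rw [← pow_add, hk]
  | one =>
    refine ⟨0, le_refl _, fun n w => ?_⟩
    simp
  | mul x y hx hy ihx ihy =>
    obtain ⟨C₁, hC₁, h₁⟩ := ihx
    obtain ⟨C₂, hC₂, h₂⟩ := ihy
    refine ⟨C₁ + C₂, by positivity, fun n w => ?_⟩
    have key : U (x * y) (boxSum U gen n w) - boxSum U gen n w
        = U x (U y (boxSum U gen n w) - boxSum U gen n w)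
          + (U x (boxSum U gen n w) - boxSum U gen n w) := by
      rw [map_sub]
      have : U (x * y) (boxSum U gen n w) = U x (U y (boxSum U gen n w)) := by
        rw [map_mul]; rfl
      rw [this]
      abel
    calc ‖U (x * y) (boxSum U gen n w) - boxSum U gen n w‖ * n
        ≤ (‖U x (U y (boxSum U gen n w) - boxSum U gen n w)‖
            + ‖U x (boxSum U gen n w) - boxSum U gen n w‖) * n := by
          refine mul_le_mul_of_nonneg_right ?_ (by positivity)
          rw [key]; exact norm_add_le _ _
      _ = ‖U y (boxSum U gen n w) - boxSum U gen n w‖ * n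
            + ‖U x (boxSum U gen n w) - boxSum U gen n w‖ * n := by
          rw [(U x).norm_map]; ring
      _ ≤ C₂ * (n : ℝ) ^ (Fintype.card ι) * ‖w‖
            + C₁ * (n : ℝ) ^ (Fintype.card ι) * ‖w‖ := add_le_add (h₂ n w) (h₁ n w)
      _ = (C₁ + C₂) * (n : ℝ) ^ (Fintype.card ι) * ‖w‖ := by ring

include hc in
lemma defect_eq (f : Γ) (n : ℕ) (hn : ((n : ℝ) ^ (Fintype.card ι)) ≠ 0) :
    c f - ((((n : ℝ) ^ (Fintype.card ι))⁻¹ • ∑ a : ι → Fin n, c (∏ i, gen i ^ (a i : ℕ)))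
        - U f ((((n : ℝ) ^ (Fintype.card ι))⁻¹ • ∑ a : ι → Fin n, c (∏ i, gen i ^ (a i : ℕ)))))
      = ((n : ℝ) ^ (Fintype.card ι))⁻¹ • boxSum U gen n (c f) := by
  have point : ∀ g : Γ, U g (c f) = c f + U f (c g) - c g := by
    intro g
    have h3 : c g + U g (c f) = c f + U f (c g) := by
      rw [← hc f g, mul_comm, hc g f]
    rw [← h3]; abel
  have hsum : boxSum U gen n (c f)
      = (n ^ (Fintype.card ι) : ℕ) • c f
          + U f (∑ a : ι → Fin n, c (∏ i, gen i ^ (a i : ℕ)))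
          - ∑ a : ι → Fin n, c (∏ i, gen i ^ (a i : ℕ)) := by
    rw [boxSum, map_sum]
    rw [Finset.sum_congr rfl fun a _ => point (∏ i, gen i ^ (a i : ℕ)),
      Finset.sum_sub_distrib, Finset.sum_add_distrib,
      Finset.sum_const, Finset.card_univ, Fintype.card_fun, Fintype.card_fin]
  rw [map_smul, hsum]
  rw [smul_sub, smul_add]
  have h1 : ((n : ℝ) ^ (Fintype.card ι))⁻¹ • ((n ^ (Fintype.card ι) : ℕ) • c f) = c f := by
    rw [← Nat.cast_smul_eq_nsmul ℝ, smul_smul]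
    push_cast
    rw [inv_mul_cancel₀ hn, one_smul]
  rw [h1]
  abel

end DriftAux

open DriftAux

/-- **Drift of cocycles over isometric actions on Banach spaces.** Let `U` be a linear
isometric action of a finitely generated Abelian group `Γ` on a Banach space `B`, and let
`c : Γ → B` be a cocycle, i.e. `c (g₁ g₂) = c g₂ + U g₂ (c g₁)`. Then the drift
`drift_c f = lim ‖c (fⁿ)‖ / n` exists for every `f ∈ Γ`, there is a sequence `(ψₙ)` in `B`
such that, for every `f ∈ Γ`, the coboundary defect `‖c f - (ψₙ - U f ψₙ)‖` converges to
`drift_c f`; in fact `drift_c f = ⨅ ψ, ‖c f - (ψ - U f ψ)‖`. -/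
theorem drift_of_cocycle_eq_inf_coboundary_defect
    {Γ : Type*} [CommGroup Γ] [Group.FG Γ]
    {B : Type*} [NormedAddCommGroup B] [NormedSpace ℝ B] [CompleteSpace B]
    (U : Γ →* (B ≃ₗᵢ[ℝ] B)) (c : Γ → B)
    (hc : ∀ g₁ g₂ : Γ, c (g₁ * g₂) = c g₂ + U g₂ (c g₁)) :
    ∃ drift : Γ → ℝ,
      (∀ f : Γ, Tendsto (fun n : ℕ => ‖c (f ^ n)‖ / n) atTop (𝓝 (drift f))) ∧
      (∃ ψ : ℕ → B, ∀ f : Γ,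
        Tendsto (fun n : ℕ => ‖c f - (ψ n - U f (ψ n))‖) atTop (𝓝 (drift f))) ∧
      (∀ f : Γ, drift f = ⨅ ψ : B, ‖c f - (ψ - U f ψ)‖) := by
  classical
  obtain ⟨S, hS⟩ : ∃ S : Finset Γ, Submonoid.closure (S : Set Γ) = ⊤ :=
    Monoid.fg_def.mp (Group.fg_iff_monoid_fg.mp inferInstance)
  set ι := {x : Γ // x ∈ S} with hι
  set gen : ι → Γ := fun i => (i : Γ) with hgendef
  have hgen : Submonoid.closure (Set.range gen) = ⊤ := by
    have h : Set.range gen = (S : Set Γ) := Subtype.range_coe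
    rw [h, hS]
  -- drift exists by subadditivity (Fekete)
  have hsub : ∀ f : Γ, Subadditive fun m : ℕ => ‖c (f ^ m)‖ := by
    intro f m m'
    show ‖c (f ^ (m + m'))‖ ≤ ‖c (f ^ m)‖ + ‖c (f ^ m')‖
    rw [pow_add, hc (f ^ m) (f ^ m')]
    calc ‖c (f ^ m') + U (f ^ m') (c (f ^ m))‖
        ≤ ‖c (f ^ m')‖ + ‖U (f ^ m') (c (f ^ m))‖ := norm_add_le _ _
      _ = ‖c (f ^ m)‖ + ‖c (f ^ m')‖ := by rw [(U _).norm_map]; ring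
  have hbdd : ∀ f : Γ, BddBelow (Set.range fun m : ℕ => ‖c (f ^ m)‖ / m) := by
    intro f
    refine ⟨0, ?_⟩
    rintro x ⟨m, rfl⟩
    positivity
  set drift : Γ → ℝ := fun f => (hsub f).lim with hdrift
  have htends : ∀ f : Γ, Tendsto (fun m : ℕ => ‖c (f ^ m)‖ / m) atTop (𝓝 (drift f)) :=
    fun f => (hsub f).tendsto_lim (hbdd f)
  -- lower bound: the drift is at most any coboundary defect
  have lowbd : ∀ (f : Γ) (ψ₀ : B), drift f ≤ ‖c f - (ψ₀ - U f ψ₀)‖ := by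
    intro f ψ₀
    have hle : ∀ᶠ m : ℕ in atTop,
        ‖c (f ^ m)‖ / m ≤ ‖c f - (ψ₀ - U f ψ₀)‖ + 2 * ‖ψ₀‖ / m := by
      filter_upwards [eventually_ge_atTop 1] with m hm
      have hmpos : (0 : ℝ) < m := by exact_mod_cast hm
      have h1 := lower_aux U c hc f ψ₀ m
      have e1 : ‖c (f ^ m)‖ ≤ ‖c (f ^ m) - (ψ₀ - U (f ^ m) ψ₀)‖ + ‖ψ₀ - U (f ^ m) ψ₀‖ := by
        calc ‖c (f ^ m)‖
            = ‖c (f ^ m) - (ψ₀ - U (f ^ m) ψ₀) + (ψ₀ - U (f ^ m) ψ₀)‖ := by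
              congr 1; abel
          _ ≤ _ := norm_add_le _ _
      have e2 : ‖ψ₀ - U (f ^ m) ψ₀‖ ≤ 2 * ‖ψ₀‖ := by
        calc ‖ψ₀ - U (f ^ m) ψ₀‖ ≤ ‖ψ₀‖ + ‖U (f ^ m) ψ₀‖ := norm_sub_le _ _
          _ = 2 * ‖ψ₀‖ := by rw [(U _).norm_map]; ring
      rw [div_le_iff₀ hmpos]
      calc ‖c (f ^ m)‖ ≤ m * ‖c f - (ψ₀ - U f ψ₀)‖ + 2 * ‖ψ₀‖ := by linarith
        _ = (‖c f - (ψ₀ - U f ψ₀)‖ + 2 * ‖ψ₀‖ / m) * m := by field_simp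
    have h2 : Tendsto (fun m : ℕ => ‖c f - (ψ₀ - U f ψ₀)‖ + 2 * ‖ψ₀‖ / m) atTop
        (𝓝 (‖c f - (ψ₀ - U f ψ₀)‖ + 0)) :=
      tendsto_const_nhds.add (tendsto_const_div_atTop_nhds_zero_nat _)
    have h3 := le_of_tendsto_of_tendsto (htends f) h2 hle
    simpa using h3
  -- the averaging sequence over boxes
  set ψ : ℕ → B :=
    fun n => ((n : ℝ) ^ (Fintype.card ι))⁻¹ • ∑ a : ι → Fin n, c (∏ i, gen i ^ (a i : ℕ))
    with hψ
  have key : ∀ (f : Γ) (n : ℕ), 1 ≤ n →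
      c f - (ψ n - U f (ψ n)) = ((n : ℝ) ^ (Fintype.card ι))⁻¹ • boxSum U gen n (c f) := by
    intro f n hn
    have hn0 : (0 : ℝ) < n := by exact_mod_cast hn
    have hn' : ((n : ℝ) ^ (Fintype.card ι)) ≠ 0 := by positivity
    rw [hψ]
    exact defect_eq U c hc gen f n hn'
  have main2 : ∀ f : Γ,
      Tendsto (fun n : ℕ => ‖c f - (ψ n - U f (ψ n))‖) atTop (𝓝 (drift f)) := by
    intro f
    obtain ⟨C, hC0, hCf⟩ := shift_all U gen hgen f
    have upper : ∀ m : ℕ, 1 ≤ m → ∀ n : ℕ, 1 ≤ n →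
        ‖c f - (ψ n - U f (ψ n))‖
          ≤ ‖c (f ^ m)‖ / m
            + (C * ‖∑ j ∈ Finset.range m, c (f ^ j)‖ / m) / n := by
      intro m hm n hn
      set Φ := ∑ j ∈ Finset.range m, c (f ^ j) with hΦ
      have hmpos : (0 : ℝ) < m := by exact_mod_cast hm
      have hnpos : (0 : ℝ) < n := by exact_mod_cast hn
      have hNpos : (0 : ℝ) < (n : ℝ) ^ (Fintype.card ι) := by positivity
      have hdecomp : c f = (m : ℝ)⁻¹ • c (f ^ m) + (m : ℝ)⁻¹ • (Φ - U f Φ) := by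
        have h := phi_identity U c hc f m
        calc c f = (m : ℝ)⁻¹ • ((m : ℝ) • c f) := by
              rw [smul_smul, inv_mul_cancel₀ (ne_of_gt hmpos), one_smul]
          _ = (m : ℝ)⁻¹ • (c (f ^ m) + ((m : ℝ) • c f - c (f ^ m))) := by
              congr 1; abel
          _ = (m : ℝ)⁻¹ • (c (f ^ m) + (Φ - U f Φ)) := by rw [h]
          _ = _ := by rw [smul_add]
      have hbox : boxSum U gen n (c f)
          = (m : ℝ)⁻¹ • boxSum U gen n (c (f ^ m))
            + (m : ℝ)⁻¹ • (boxSum U gen n Φ - U f (boxSum U gen n Φ)) := by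
        conv_lhs => rw [hdecomp]
        rw [boxSum_add, boxSum_smul, boxSum_smul, boxSum_sub, boxSum_comm]
      have hshift : ‖boxSum U gen n Φ - U f (boxSum U gen n Φ)‖
          ≤ C * (n : ℝ) ^ (Fintype.card ι) * ‖Φ‖ / n := by
        rw [norm_sub_rev, le_div_iff₀ hnpos]
        exact hCf n Φ
      calc ‖c f - (ψ n - U f (ψ n))‖
          = ‖((n : ℝ) ^ (Fintype.card ι))⁻¹ • boxSum U gen n (c f)‖ := by rw [key f n hn]
        _ = ((n : ℝ) ^ (Fintype.card ι))⁻¹ * ‖boxSum U gen n (c f)‖ := by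
            rw [norm_smul, Real.norm_eq_abs, abs_of_pos (by positivity)]
        _ ≤ ((n : ℝ) ^ (Fintype.card ι))⁻¹
              * ((m : ℝ)⁻¹ * ((n : ℝ) ^ (Fintype.card ι) * ‖c (f ^ m)‖)
                + (m : ℝ)⁻¹ * (C * (n : ℝ) ^ (Fintype.card ι) * ‖Φ‖ / n)) := by
            refine mul_le_mul_of_nonneg_left ?_ (by positivity)
            rw [hbox]
            calc ‖(m : ℝ)⁻¹ • boxSum U gen n (c (f ^ m))
                  + (m : ℝ)⁻¹ • (boxSum U gen n Φ - U f (boxSum U gen n Φ))‖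
                ≤ ‖(m : ℝ)⁻¹ • boxSum U gen n (c (f ^ m))‖
                  + ‖(m : ℝ)⁻¹ • (boxSum U gen n Φ - U f (boxSum U gen n Φ))‖ :=
                  norm_add_le _ _
              _ = (m : ℝ)⁻¹ * ‖boxSum U gen n (c (f ^ m))‖
                  + (m : ℝ)⁻¹ * ‖boxSum U gen n Φ - U f (boxSum U gen n Φ)‖ := by
                  rw [norm_smul, norm_smul, Real.norm_eq_abs, abs_of_pos (by positivity)]
              _ ≤ _ := by
                  refine add_le_add
                    (mul_le_mul_of_nonneg_left (boxSum_norm_le U gen n _) (by positivity))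
                    (mul_le_mul_of_nonneg_left hshift (by positivity))
        _ = ‖c (f ^ m)‖ / m + (C * ‖Φ‖ / m) / n := by
            field_simp
    rw [Metric.tendsto_nhds]
    intro ε hε
    obtain ⟨m, hm1, hmlt⟩ : ∃ m : ℕ, 1 ≤ m ∧ ‖c (f ^ m)‖ / m < drift f + ε / 2 := by
      have h1 : ∀ᶠ m : ℕ in atTop, ‖c (f ^ m)‖ / m < drift f + ε / 2 :=
        (htends f).eventually (Iio_mem_nhds (by linarith))
      obtain ⟨m, hm⟩ := ((eventually_ge_atTop 1).and h1).exists
      exact ⟨m, hm.1, hm.2⟩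
    have hK : Tendsto (fun n : ℕ => (C * ‖∑ j ∈ Finset.range m, c (f ^ j)‖ / m) / n)
        atTop (𝓝 0) := tendsto_const_div_atTop_nhds_zero_nat _
    filter_upwards [eventually_ge_atTop 1, hK.eventually (Iio_mem_nhds (half_pos hε))]
      with n hn1 hn2
    have hup := upper m hm1 n hn1
    have hlow := lowbd f (ψ n)
    have hn2' : (C * ‖∑ j ∈ Finset.range m, c (f ^ j)‖ / m) / n < ε / 2 := hn2
    rw [Real.dist_eq, abs_of_nonneg (by linarith)]
    linarith
  refine ⟨drift, htends, ⟨ψ, main2⟩, fun f => ?_⟩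
  have hbdd2 : BddBelow (Set.range fun ψ₀ : B => ‖c f - (ψ₀ - U f ψ₀)‖) := by
    refine ⟨0, ?_⟩
    rintro x ⟨ψ₀, rfl⟩
    positivity
  refine le_antisymm (le_ciInf fun ψ₀ => lowbd f ψ₀) ?_
  refine ge_of_tendsto (main2 f) ?_
  exact Eventually.of_forall fun n => ciInf_le hbdd2 (ψ n)
end
end
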